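/- arXiv:1904.12158 — 13 statements merged into one kernel-verified Lean document; each statement's English description precedes it below -/
import Mathlib

section
/- Low-frequency stagnation of the classical Schwarz method (Theorem 2.2, first case): for every Fourier frequency k with 0 ≤ k < ω/Cp and every overlap δ > 0, both roots r₊, r₋ of the quadratic Q(z) = z² − (X² + 2Y)z + Y² have modulus exactly equal to 1; consequently the convergence factor satisfies ρ_cla(k) = max(|r₊|, |r₋|) = 1 and the classical Schwarz method stagnates on these frequencies. -/
/-!
Classical Schwarz method for the time-harmonic Navier equations:
low-frequency stagnation (Theorem 2.2, first case).
-/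

noncomputable section

open Complex

/-- `λ₁ = √(k² − ω²/Cs²)`, principal branch of the complex square root. -/
def lam1 (ω Cs k : ℝ) : ℂ := ((k ^ 2 - ω ^ 2 / Cs ^ 2 : ℝ) : ℂ) ^ ((1 : ℂ) / 2)

/-- `λ₂ = √(k² − ω²/Cp²)`, principal branch of the complex square root. -/
def lam2 (ω Cp k : ℝ) : ℂ := ((k ^ 2 - ω ^ 2 / Cp ^ 2 : ℝ) : ℂ) ^ ((1 : ℂ) / 2)

/-- `X = ((k² + λ₁λ₂)/(k² − λ₁λ₂))(e^{−λ₁δ} − e^{−λ₂δ})` of the classical Schwarz method. -/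
def Xcla (ω Cs Cp k δ : ℝ) : ℂ :=
  (((k : ℂ) ^ 2 + lam1 ω Cs k * lam2 ω Cp k) / ((k : ℂ) ^ 2 - lam1 ω Cs k * lam2 ω Cp k)) *
    (Complex.exp (-(lam1 ω Cs k) * (δ : ℂ)) - Complex.exp (-(lam2 ω Cp k) * (δ : ℂ)))

/-- `Y = e^{−δ(λ₁+λ₂)}` of the classical Schwarz method. -/
def Ycla (ω Cs Cp k δ : ℝ) : ℂ :=
  Complex.exp (-(δ : ℂ) * (lam1 ω Cs k + lam2 ω Cp k))

/-- The quadratic `Q(z) = z² − (X² + 2Y)z + Y²` whose roots are the eigenvalues `r±`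
of the double-iteration operator of the classical overlapping Schwarz method. -/
def Qcla (ω Cs Cp k δ : ℝ) (z : ℂ) : ℂ :=
  z ^ 2 - ((Xcla ω Cs Cp k δ) ^ 2 + 2 * Ycla ω Cs Cp k δ) * z + (Ycla ω Cs Cp k δ) ^ 2


lemma cpow_half_neg (x : ℝ) (hx : x < 0) :
    ((x : ℂ)) ^ ((1 : ℂ)/2) = (Real.sqrt (-x) : ℂ) * I := by
  have hx0 : (x : ℂ) ≠ 0 := by exact_mod_cast hx.ne
  rw [Complex.cpow_def_of_ne_zero hx0]
  have hlog : Complex.log (x : ℂ) = (Real.log (-x) : ℂ) + (Real.pi : ℂ) * I := by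
    rw [Complex.log]
    simp [Complex.norm_real, Real.norm_eq_abs, abs_of_neg hx, Complex.arg_ofReal_of_neg hx, Real.log_neg_eq_log]
  rw [hlog, show ((Real.log (-x) : ℂ) + (Real.pi : ℂ) * I) * ((1:ℂ)/2)
      = ((Real.log (-x)/2 : ℝ) : ℂ) + ((Real.pi/2 : ℝ) : ℂ) * I by push_cast; ring,
    Complex.exp_add, Complex.exp_mul_I]
  rw [← Complex.ofReal_cos, ← Complex.ofReal_sin, Real.cos_pi_div_two, Real.sin_pi_div_two,
    ← Complex.ofReal_exp]
  have : Real.exp (Real.log (-x) / 2) = Real.sqrt (-x) := by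
    rw [Real.sqrt_eq_rpow, Real.rpow_def_of_pos (by linarith), mul_one_div]
  rw [this]; push_cast; ring

lemma key_identity (t A B : ℝ) :
    ((t:ℂ) * (Complex.exp (-(A:ℂ)*I) - Complex.exp (-(B:ℂ)*I)))^2
      + 2 * Complex.exp (-((A+B : ℝ):ℂ)*I)
    = ((2 + t^2*(2*Real.cos (A-B) - 2) : ℝ) : ℂ) * Complex.exp (-((A+B : ℝ):ℂ)*I) := by
  have e1 : Complex.exp (((A-B : ℝ):ℂ)*I) * Complex.exp (-((A+B : ℝ):ℂ)*I)
      = Complex.exp (-(B:ℂ)*I) * Complex.exp (-(B:ℂ)*I) := by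
    rw [← Complex.exp_add, ← Complex.exp_add]; congr 1; push_cast; ring
  have e2 : Complex.exp (-((A-B : ℝ):ℂ)*I) * Complex.exp (-((A+B : ℝ):ℂ)*I)
      = Complex.exp (-(A:ℂ)*I) * Complex.exp (-(A:ℂ)*I) := by
    rw [← Complex.exp_add, ← Complex.exp_add]; congr 1; push_cast; ring
  have e3 : Complex.exp (-(A:ℂ)*I) * Complex.exp (-(B:ℂ)*I)
      = Complex.exp (-((A+B : ℝ):ℂ)*I) := by
    rw [← Complex.exp_add]; congr 1; push_cast; ring
  have htc := Complex.two_cos ((A-B : ℝ):ℂ)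
  push_cast at e1 e2 e3 htc ⊢
  linear_combination (-(t:ℂ)^2) * e2 + (-(t:ℂ)^2) * e1 - 2*(t:ℂ)^2*e3
    - (t:ℂ)^2 * Complex.exp (-((A:ℂ)+(B:ℂ))*I) * htc

lemma root_abs_one (c : ℝ) (hc : |c| ≤ 2) (w : ℂ)
    (hw : w ^ 2 - (c : ℂ) * w + 1 = 0) : ‖w‖ = 1 := by
  have hconj : (starRingEnd ℂ) w ^ 2 - (c : ℂ) * (starRingEnd ℂ) w + 1 = 0 := by
    have h := congrArg (starRingEnd ℂ) hw
    simpa [map_sub, map_add, map_mul, map_pow, Complex.conj_ofReal] using h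
  have hfac : ((starRingEnd ℂ) w - w) * ((starRingEnd ℂ) w - ((c : ℂ) - w)) = 0 := by
    linear_combination hconj - hw
  rcases mul_eq_zero.mp hfac with h | h
  · have hre : ((w.re : ℝ) : ℂ) = w := Complex.conj_eq_iff_re.mp (sub_eq_zero.mp h)
    set r := w.re with hr
    have hrr : r ^ 2 - c * r + 1 = 0 := by
      have : ((r ^ 2 - c * r + 1 : ℝ) : ℂ) = 0 := by push_cast [hre]; linear_combination hw
      exact_mod_cast this
    obtain ⟨hc1, hc2⟩ := abs_le.mp hc
    have heq : (r ^ 2 - 1) ^ 2 = (c ^ 2 - 4) * r ^ 2 := by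
      linear_combination (r ^ 2 + c * r + 1) * hrr
    have hc4 : c ^ 2 ≤ 4 := by nlinarith
    have h2 : (r ^ 2 - 1) ^ 2 ≤ 0 := by
      rw [heq]
      nlinarith [mul_nonneg (by linarith : (0:ℝ) ≤ 4 - c ^ 2) (sq_nonneg r)]
    have hr2 : r ^ 2 = 1 := by nlinarith [sq_nonneg (r ^ 2 - 1)]
    have : (r - 1) * (r + 1) = 0 := by nlinarith
    rcases mul_eq_zero.mp this with h' | h'
    · have : r = 1 := by linarith
      rw [← hre, this]; simp
    · have : r = -1 := by linarith
      rw [← hre, this]; simp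
  · have hcw : (starRingEnd ℂ) w = (c : ℂ) - w := sub_eq_zero.mp h
    have hns : ((Complex.normSq w : ℝ) : ℂ) = 1 := by
      rw [← Complex.mul_conj, hcw]; linear_combination -hw
    have hns1 : Complex.normSq w = 1 := by exact_mod_cast hns
    rw [Complex.norm_def, hns1, Real.sqrt_one]

/-- **Theorem 2.2, first case**: for `0 ≤ k < ω/Cp` and any overlap `δ > 0`, both roots of
`Q(z) = z² − (X² + 2Y)z + Y²` have modulus exactly `1`, so `ρ_cla(k) = 1` and the classical
Schwarz method stagnates on these frequencies. -/
theorem classical_schwarz_low_frequency_stagnation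
    (ω Cs Cp k δ : ℝ)
    (hω : 0 < ω) (hCs : 0 < Cs) (hCsCp : Cs < Cp) (hCp2 : 2 * Cs ^ 2 < Cp ^ 2)
    (hk0 : 0 ≤ k) (hk : k < ω / Cp) (hδ : 0 < δ) :
    ∀ z : ℂ, Qcla ω Cs Cp k δ z = 0 → ‖z‖ = 1 := by
  have hCp : 0 < Cp := hCs.trans hCsCp
  have hkCp : k * Cp < ω := (lt_div_iff₀ hCp).mp hk
  have hx2 : k ^ 2 - ω ^ 2 / Cp ^ 2 < 0 := by
    rw [sub_neg, lt_div_iff₀ (by positivity)]; nlinarith [mul_nonneg hk0 hCp.le]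
  have hx1 : k ^ 2 - ω ^ 2 / Cs ^ 2 < 0 := by
    have : ω ^ 2 / Cp ^ 2 ≤ ω ^ 2 / Cs ^ 2 :=
      div_le_div_of_nonneg_left (sq_nonneg ω) (pow_pos hCs 2) (by nlinarith)
    linarith
  set a : ℝ := Real.sqrt (-(k ^ 2 - ω ^ 2 / Cs ^ 2)) with ha_def
  set b : ℝ := Real.sqrt (-(k ^ 2 - ω ^ 2 / Cp ^ 2)) with hb_def
  have ha : 0 < a := Real.sqrt_pos.mpr (by linarith)
  have hb : 0 < b := Real.sqrt_pos.mpr (by linarith)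
  have hlam1 : lam1 ω Cs k = (a : ℂ) * I := cpow_half_neg _ hx1
  have hlam2 : lam2 ω Cp k = (b : ℂ) * I := cpow_half_neg _ hx2
  have hab : 0 < a * b := mul_pos ha hb
  set t : ℝ := (k ^ 2 - a * b) / (k ^ 2 + a * b) with ht_def
  have hden : (0:ℝ) < k ^ 2 + a * b := by positivity
  have ht2 : t ^ 2 ≤ 1 := by
    rw [ht_def, div_pow, div_le_one (by positivity)]
    nlinarith [mul_nonneg (sq_nonneg k) hab.le]
  have hX : Xcla ω Cs Cp k δ
      = (t : ℂ) * (Complex.exp (-((a*δ : ℝ):ℂ)*I) - Complex.exp (-((b*δ : ℝ):ℂ)*I)) := by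
    rw [Xcla, hlam1, hlam2]
    have hmul : ((a:ℂ) * I) * ((b:ℂ) * I) = -(((a*b : ℝ)):ℂ) := by
      rw [show ((a:ℂ) * I) * ((b:ℂ) * I) = ((a:ℂ)*(b:ℂ))*I^2 by ring, Complex.I_sq]
      push_cast; ring
    rw [hmul]
    have hfrac : ((k:ℂ)^2 + -(((a*b : ℝ)):ℂ)) / ((k:ℂ)^2 - -(((a*b : ℝ)):ℂ)) = (t:ℂ) := by
      rw [ht_def]; push_cast; ring_nf
    rw [hfrac]
    congr 2 <;> · congr 1; push_cast; ring
  have hY : Ycla ω Cs Cp k δ = Complex.exp (-((a*δ + b*δ : ℝ):ℂ)*I) := by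
    rw [Ycla, hlam1, hlam2]; congr 1; push_cast; ring
  set cr : ℝ := 2 + t^2*(2*Real.cos (a*δ - b*δ) - 2) with hcr_def
  have hkey : (Xcla ω Cs Cp k δ)^2 + 2 * Ycla ω Cs Cp k δ = (cr : ℂ) * Ycla ω Cs Cp k δ := by
    rw [hX, hY, hcr_def]
    exact key_identity t (a*δ) (b*δ)
  have hcr : |cr| ≤ 2 := by
    rw [abs_le, hcr_def]
    have h1 := Real.cos_le_one (a*δ - b*δ)
    have h2 := Real.neg_one_le_cos (a*δ - b*δ)
    constructor
    · nlinarith [sq_nonneg t, mul_nonneg (by linarith : (0:ℝ) ≤ 1 - t^2)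
        (by linarith : (0:ℝ) ≤ 2 - 2*Real.cos (a*δ - b*δ))]
    · nlinarith [sq_nonneg t]
  have hYne : Ycla ω Cs Cp k δ ≠ 0 := by rw [hY]; exact Complex.exp_ne_zero _
  have hYabs : ‖Ycla ω Cs Cp k δ‖ = 1 := by
    rw [hY, show -((a*δ + b*δ : ℝ):ℂ)*I = ((-(a*δ + b*δ) : ℝ):ℂ)*I by push_cast; ring,
      Complex.norm_exp_ofReal_mul_I]
  intro z hz
  rw [Qcla, hkey] at hz
  set Y := Ycla ω Cs Cp k δ
  have hw : (z / Y) ^ 2 - (cr : ℂ) * (z / Y) + 1 = 0 := by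
    have h0 : Y ^ 2 * ((z / Y) ^ 2 - (cr : ℂ) * (z / Y) + 1) = 0 := by
      rw [← hz]; field_simp
    exact (mul_eq_zero.mp h0).resolve_left (pow_ne_zero 2 hYne)
  have habs := root_abs_one cr hcr (z / Y) hw
  rw [norm_div, hYabs, div_one] at habs
  exact habs


end
end

section
/- Stagnation of the classical Schwarz method at the pressure-wave cutoff (Theorem 2.2, k = ω/Cp): at k = ω/Cp one has λ₂ = 0 and λ₁ = i·λ̄₁ with λ̄₁ = ω√(Cp² − Cs²)/(Cp·Cs) > 0, and for every overlap δ > 0 the two roots of the quadratic Q(z) = z² − (X² + 2Y)z + Y² are exactly 1 and e^{−2iλ̄₁δ}; in particular both roots have modulus 1 and ρ_cla(ω/Cp) = 1. -/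
noncomputable section

open Complex

private lemma cpow_half_of_neg (x : ℝ) (hx : x < 0) :
    ((x:ℂ)) ^ ((1:ℂ)/2) = Complex.I * ((Real.sqrt (-x) : ℝ) : ℂ) := by
  have hx0 : (x:ℂ) ≠ 0 := by exact_mod_cast ne_of_lt hx
  rw [Complex.cpow_def_of_ne_zero hx0]
  have hlog : Complex.log (x:ℂ) = (↑(Real.log (-x)) : ℂ) + ↑Real.pi * I := by
    rw [Complex.log, Complex.arg_ofReal_of_neg hx, Complex.norm_real, Real.norm_eq_abs, abs_of_neg hx]
  rw [hlog]
  have harg : (((Real.log (-x) : ℝ) : ℂ) + ↑Real.pi * I) * ((1:ℂ)/2)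
      = (↑(Real.log (-x) / 2) : ℂ) + (↑(Real.pi/2) : ℝ) * I := by
    push_cast; ring
  rw [harg, Complex.exp_add, ← Complex.ofReal_exp]
  have h1 : Real.exp (Real.log (-x) / 2) = Real.sqrt (-x) := by
    rw [← Real.log_sqrt (by linarith), Real.exp_log (Real.sqrt_pos.2 (by linarith))]
  have h2 : Complex.exp ((↑(Real.pi/2) : ℝ) * I) = I := by
    rw [Complex.exp_mul_I]
    push_cast
    simp [Real.cos_pi_div_two, Real.sin_pi_div_two]
  rw [h1, h2]; ring

/-- **Theorem 2.2, k = ω/Cp**: at the pressure-wave cutoff one has `λ₂ = 0` and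
`λ₁ = i·λ̄₁` with `λ̄₁ = ω√(Cp² − Cs²)/(Cp·Cs) > 0`, and for every overlap `δ > 0` the two
roots of `Q(z) = z² − (X² + 2Y)z + Y²` are exactly `1` and `e^{−2iλ̄₁δ}`; in particular both
roots have modulus `1` and `ρ_cla(ω/Cp) = 1`. -/
theorem classical_schwarz_pressure_cutoff_stagnation
    (ω Cs Cp k δ : ℝ)
    (hω : 0 < ω) (hCs : 0 < Cs) (hCsCp : Cs < Cp) (hCp2 : 2 * Cs ^ 2 < Cp ^ 2)
    (hk : k = ω / Cp) (hδ : 0 < δ) :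
    0 < ω * Real.sqrt (Cp ^ 2 - Cs ^ 2) / (Cp * Cs) ∧
    lam2 ω Cp k = 0 ∧
    lam1 ω Cs k = Complex.I * ((ω * Real.sqrt (Cp ^ 2 - Cs ^ 2) / (Cp * Cs) : ℝ) : ℂ) ∧
    (∀ z : ℂ, Qcla ω Cs Cp k δ z = 0 ↔
      z = 1 ∨
      z = Complex.exp (-2 * Complex.I *
            ((ω * Real.sqrt (Cp ^ 2 - Cs ^ 2) / (Cp * Cs) : ℝ) : ℂ) * (δ : ℂ))) ∧
    ‖Complex.exp (-2 * Complex.I *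
        ((ω * Real.sqrt (Cp ^ 2 - Cs ^ 2) / (Cp * Cs) : ℝ) : ℂ) * (δ : ℂ))‖ = 1 := by
  have hCp : 0 < Cp := hCs.trans hCsCp
  set lb : ℝ := ω * Real.sqrt (Cp ^ 2 - Cs ^ 2) / (Cp * Cs) with hlb
  have hsq : 0 < Cp ^ 2 - Cs ^ 2 := by nlinarith
  have hlbpos : 0 < lb := by
    apply div_pos (mul_pos hω (Real.sqrt_pos.2 hsq)) (mul_pos hCp hCs)
  -- lam2 = 0
  have hk2 : k ^ 2 - ω ^ 2 / Cp ^ 2 = 0 := by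
    rw [hk]; field_simp; ring
  have hlam2 : lam2 ω Cp k = 0 := by
    rw [lam2, hk2]
    simp only [Complex.ofReal_zero]
    exact Complex.zero_cpow (by norm_num)
  -- lam1 = I * lb
  have hxneg : k ^ 2 - ω ^ 2 / Cs ^ 2 < 0 := by
    rw [hk, div_pow]
    rw [div_sub_div _ _ (by positivity : Cp ^ 2 ≠ 0) (by positivity : Cs ^ 2 ≠ 0)]
    apply div_neg_of_neg_of_pos _ (by positivity)
    nlinarith [mul_pos (pow_pos hω 2) hsq]
  have hsqrt : Real.sqrt (-(k ^ 2 - ω ^ 2 / Cs ^ 2)) = lb := by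
    have heq : -(k ^ 2 - ω ^ 2 / Cs ^ 2) = lb ^ 2 := by
      rw [hlb, hk, div_pow, div_pow, mul_pow, mul_pow,
        Real.sq_sqrt (le_of_lt hsq)]
      field_simp
      ring
    rw [heq, Real.sqrt_sq (le_of_lt hlbpos)]
  have hlam1 : lam1 ω Cs k = Complex.I * ((lb : ℝ) : ℂ) := by
    rw [lam1, cpow_half_of_neg _ hxneg, hsqrt]
  refine ⟨hlbpos, hlam2, hlam1, ?_, ?_⟩
  · -- roots of Q
    intro z
    have hkne : (k : ℂ) ^ 2 ≠ 0 := by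
      have : k ≠ 0 := by rw [hk]; positivity
      exact pow_ne_zero 2 (by exact_mod_cast this)
    set b : ℂ := Complex.exp (-(lam1 ω Cs k) * (δ : ℂ)) with hb
    have hX : Xcla ω Cs Cp k δ = b - 1 := by
      rw [Xcla, hlam2]
      simp only [mul_zero, add_zero, sub_zero, div_self hkne, one_mul, neg_zero,
        zero_mul, Complex.exp_zero]
      rfl
    have hY : Ycla ω Cs Cp k δ = b := by
      rw [Ycla, hlam2, hb]
      ring_nf
    have hb2 : b ^ 2 = Complex.exp (-2 * Complex.I * ((lb : ℝ) : ℂ) * (δ : ℂ)) := by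
      rw [hb, ← Complex.exp_nat_mul, hlam1]
      congr 1
      push_cast
      ring
    have hQ : Qcla ω Cs Cp k δ z = (z - 1) * (z - b ^ 2) := by
      rw [Qcla, hX, hY]; ring
    rw [hQ, hb2, mul_eq_zero, sub_eq_zero, sub_eq_zero]
  · -- modulus 1
    rw [Complex.norm_exp]
    have : (-2 * Complex.I * ((lb : ℝ) : ℂ) * (δ : ℂ)).re = 0 := by simp
    rw [this, Real.exp_zero]


end
end

section
/- Divergence of the classical Schwarz method on intermediate frequencies (Theorem 2.2, middle case): for every fixed Fourier frequency k with ω/Cp < k < ω/Cs (so that λ₁ = i√(ω²/Cs² − k²) is purely imaginary and λ₂ = √(k² − ω²/Cp²) > 0 is real), there exists δ₀ > 0 such that for all overlaps δ with 0 < δ < δ₀, the quadratic Q(z) = z² − (X² + 2Y)z + Y² has a root of modulus strictly greater than 1; hence ρ_cla(k) > 1 and the classical Schwarz method diverges for small overlap. -/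
noncomputable section

open Complex

/-! ### Auxiliary lemmas -/

lemma aux_sq_cpow_half (w : ℂ) : (w ^ ((1:ℂ)/2)) ^ 2 = w := by
  rcases eq_or_ne w 0 with h | h
  · simp [h, Complex.zero_cpow (show (1:ℂ)/2 ≠ 0 by norm_num)]
  · rw [sq, ← Complex.cpow_add _ _ h]; norm_num

lemma aux_root (X Y : ℂ) :
    (Y + X^2/2 + X * ((X^2/4 + Y) ^ ((1:ℂ)/2)))^2
      - (X^2 + 2*Y) * (Y + X^2/2 + X * ((X^2/4 + Y) ^ ((1:ℂ)/2))) + Y^2 = 0 := by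
  linear_combination X^2 * aux_sq_cpow_half (X^2/4 + Y)

lemma aux_slope {g : ℝ → ℝ} {L : ℝ} (hg : HasDerivAt g L 0) (h0 : g 0 = 1) (hL : 0 < L) :
    ∃ δ₀ > 0, ∀ δ : ℝ, 0 < δ → δ < δ₀ → 1 < g δ := by
  have h1 : Filter.Tendsto (slope g 0) (nhdsWithin 0 {(0:ℝ)}ᶜ) (nhds L) :=
    hasDerivAt_iff_tendsto_slope.mp hg
  have h2 : Filter.Tendsto (slope g 0) (nhdsWithin 0 (Set.Ioi 0)) (nhds L) :=
    h1.mono_left (nhdsWithin_mono _ (fun x hx => ne_of_gt hx))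
  have h3 : ∀ᶠ δ in nhdsWithin 0 (Set.Ioi 0), 0 < slope g 0 δ :=
    h2.eventually (eventually_gt_nhds hL)
  rw [eventually_nhdsWithin_iff] at h3
  rcases Metric.eventually_nhds_iff.mp h3 with ⟨ε, hε, hb⟩
  refine ⟨ε, hε, fun δ hδ hδε => ?_⟩
  have h4 := hb (y := δ) (by simp [abs_of_pos hδ, hδε]) hδ
  rw [slope_def_field] at h4
  have h5 : 0 < (g δ - g 0) / δ := by simpa [div_eq_mul_inv] using h4
  rcases div_pos_iff.mp h5 with ⟨h,_⟩ | ⟨h,_⟩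
  · linarith [h0 ▸ h]
  · linarith

lemma aux_hasDerivAt (l1 l2 c : ℂ) :
    HasDerivAt (fun δ : ℝ =>
      (Complex.exp (-(δ:ℂ)*(l1+l2))
        + (c * (Complex.exp (-l1*(δ:ℂ)) - Complex.exp (-l2*(δ:ℂ))))^2/2
        + (c * (Complex.exp (-l1*(δ:ℂ)) - Complex.exp (-l2*(δ:ℂ))))
          * (((c * (Complex.exp (-l1*(δ:ℂ)) - Complex.exp (-l2*(δ:ℂ))))^2/4
              + Complex.exp (-(δ:ℂ)*(l1+l2))) ^ ((1:ℂ)/2))).re)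
      ((-(l1+l2) + c*(l2-l1)).re) 0 := by
  have hid : HasDerivAt (fun δ : ℝ => (δ:ℂ)) 1 0 := by
    simpa using (hasDerivAt_id (0:ℝ)).ofReal_comp
  have h1 : HasDerivAt (fun δ : ℝ => Complex.exp (-l1*(δ:ℂ))) (-l1) 0 := by
    simpa using (hid.const_mul (-l1)).cexp
  have h2 : HasDerivAt (fun δ : ℝ => Complex.exp (-l2*(δ:ℂ))) (-l2) 0 := by
    simpa using (hid.const_mul (-l2)).cexp
  have hY : HasDerivAt (fun δ : ℝ => Complex.exp (-(δ:ℂ)*(l1+l2))) (-(l1+l2)) 0 := by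
    have := ((hid.mul_const (l1+l2)).neg).cexp
    simpa [neg_mul] using this
  set X : ℝ → ℂ := fun δ => c * (Complex.exp (-l1*(δ:ℂ)) - Complex.exp (-l2*(δ:ℂ))) with hXdef
  have hX0 : X 0 = 0 := by simp [hXdef]
  have hX : HasDerivAt X (c*(l2-l1)) 0 := by
    have := (h1.sub h2).const_mul c
    exact this.congr_deriv (by ring)
  set Y : ℝ → ℂ := fun δ => Complex.exp (-(δ:ℂ)*(l1+l2)) with hYdef
  have hY0 : Y 0 = 1 := by simp [hYdef]
  have hX2 : HasDerivAt (fun δ : ℝ => (X δ)^2) 0 0 := by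
    have := hX.mul hX
    simp only [hX0, mul_zero, zero_mul, add_zero] at this
    exact this.congr_of_eventuallyEq (Filter.Eventually.of_forall fun δ => by simp [pow_two])
  have hw : HasDerivAt (fun δ : ℝ => (X δ)^2/4 + Y δ) (-(l1+l2)) 0 := by
    have := (hX2.div_const 4).add hY
    exact this.congr_deriv (by simp)
  have hw0 : (X 0)^2/4 + Y 0 = 1 := by simp [hX0, hY0]
  have hcpow : HasDerivAt (fun z : ℂ => z ^ ((1:ℂ)/2)) ((1:ℂ)/2) 1 := by
    have h := (Complex.hasStrictDerivAt_cpow_const (c := (1:ℂ)/2)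
      (x := 1) (Or.inl (by norm_num))).hasDerivAt
    simpa using h
  have hS : HasDerivAt (fun δ : ℝ => ((X δ)^2/4 + Y δ) ^ ((1:ℂ)/2))
      (-(l1+l2) * ((1:ℂ)/2)) 0 := by
    have hF := (hcpow.hasFDerivAt.restrictScalars ℝ).comp_hasDerivAt_of_eq 0 hw hw0.symm
    exact hF.congr_deriv (by simp)
  have hz : HasDerivAt (fun δ : ℝ => Y δ + (X δ)^2/2 + X δ * (((X δ)^2/4 + Y δ) ^ ((1:ℂ)/2)))
      (-(l1+l2) + c*(l2-l1)) 0 := by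
    have := (hY.add (hX2.div_const 2)).add (hX.mul hS)
    exact this.congr_deriv (by rw [hX0]; simp [hY0])
  exact (Complex.reCLM.hasFDerivAt).comp_hasDerivAt 0 hz

lemma aux_cpow_neg (t : ℝ) (ht : t < 0) :
    ((t:ℝ):ℂ)^((1:ℂ)/2) = (Real.sqrt (-t) : ℂ) * I := by
  rw [show ((1:ℂ)/2) = (((1:ℝ)/2 : ℝ):ℂ) by norm_num]
  rw [Complex.ofReal_cpow_of_nonpos ht.le]
  have h2 : (-(t:ℂ)) ^ ((((1:ℝ)/2 : ℝ)):ℂ) = (Real.sqrt (-t) : ℂ) := by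
    rw [show (-(t:ℂ)) = ((-t:ℝ):ℂ) by push_cast; ring,
      ← Complex.ofReal_cpow (by linarith) ((1:ℝ)/2)]
    norm_num [Real.sqrt_eq_rpow]
  rw [h2]
  have h3 : (↑Real.pi * I * ((((1:ℝ)/2):ℝ):ℂ)) = ((Real.pi/2 : ℝ):ℂ) * I := by push_cast; ring
  rw [h3, Complex.exp_mul_I]
  push_cast
  simp

lemma aux_cpow_nonneg (s : ℝ) (hs : 0 ≤ s) : ((s:ℝ):ℂ)^((1:ℂ)/2) = (Real.sqrt s : ℂ) := by
  rw [show ((1:ℂ)/2) = (((1:ℝ)/2 : ℝ):ℂ) by norm_num,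
    ← Complex.ofReal_cpow hs ((1:ℝ)/2)]
  norm_num [Real.sqrt_eq_rpow]

lemma aux_re_formula (a b k : ℝ) (hk : k ≠ 0) :
    ((-(((a:ℂ)*I) + (b:ℂ)) +
      (((k:ℂ)^2 + (a:ℂ)*I*(b:ℂ))/((k:ℂ)^2 - (a:ℂ)*I*(b:ℂ))) * ((b:ℂ) - (a:ℂ)*I)).re)
      = 2*a^2*b*(k^2-b^2)/(k^4+a^2*b^2) := by
  have hd : ((k:ℂ)^2 - (a:ℂ)*I*(b:ℂ)) ≠ 0 := by
    intro h
    have := congrArg Complex.re h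
    simp [pow_two] at this
    exact hk (by nlinarith [this] : k = 0)
  rw [div_mul_eq_mul_div]
  simp [Complex.add_re, Complex.div_re, pow_two, Complex.normSq_apply, Complex.mul_re,
    Complex.mul_im]
  have hD : b^2*a^2+k^4 ≠ 0 := by positivity
  linear_combination b * (inv_mul_cancel₀ hD)

/-- **Theorem 2.2, middle case**: for every frequency `k` with `ω/Cp < k < ω/Cs`, there is
`δ₀ > 0` such that for all overlaps `0 < δ < δ₀` the quadratic
`Q(z) = z² − (X² + 2Y)z + Y²` has a root of modulus strictly greater than `1`; hence
`ρ_cla(k) > 1` and the classical Schwarz method diverges for small overlap. -/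
theorem classical_schwarz_intermediate_divergence
    (ω Cs Cp k : ℝ)
    (hω : 0 < ω) (hCs : 0 < Cs) (hCsCp : Cs < Cp) (hCp2 : 2 * Cs ^ 2 < Cp ^ 2)
    (hk1 : ω / Cp < k) (hk2 : k < ω / Cs) :
    ∃ δ₀ > 0, ∀ δ : ℝ, 0 < δ → δ < δ₀ →
      ∃ z : ℂ, Qcla ω Cs Cp k δ z = 0 ∧ 1 < ‖z‖ := by
  have hCp : 0 < Cp := lt_trans hCs hCsCp
  have hk0 : 0 < k := lt_trans (div_pos hω hCp) hk1
  -- the real quantities a, b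
  set a : ℝ := Real.sqrt (ω^2/Cs^2 - k^2) with hadef
  set b : ℝ := Real.sqrt (k^2 - ω^2/Cp^2) with hbdef
  have ht : k^2 - ω^2/Cs^2 < 0 := by
    have h1 : k^2 < (ω/Cs)^2 := by
      exact pow_lt_pow_left₀ hk2 hk0.le (by norm_num)
    rw [div_pow] at h1
    linarith
  have hs : 0 < k^2 - ω^2/Cp^2 := by
    have h1 : (ω/Cp)^2 < k^2 := by
      exact pow_lt_pow_left₀ hk1 (le_of_lt (div_pos hω hCp)) (by norm_num)
    rw [div_pow] at h1
    linarith
  have ha : 0 < a := Real.sqrt_pos.mpr (by linarith)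
  have hb : 0 < b := Real.sqrt_pos.mpr hs
  have hb2 : b^2 = k^2 - ω^2/Cp^2 := Real.sq_sqrt hs.le
  have hbk : b^2 < k^2 := by
    have : 0 < ω^2/Cp^2 := by positivity
    rw [hb2]; linarith
  -- evaluation of lam1, lam2
  have hl1 : lam1 ω Cs k = (a:ℂ) * I := by
    rw [lam1, aux_cpow_neg _ ht, neg_sub]
  have hl2 : lam2 ω Cp k = (b:ℂ) := by
    rw [lam2, aux_cpow_nonneg _ (by linarith)]
  -- derivative of the real part of the chosen root
  set l1 : ℂ := lam1 ω Cs k with hl1def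
  set l2 : ℂ := lam2 ω Cp k with hl2def
  set c : ℂ := ((k:ℂ)^2 + l1*l2)/((k:ℂ)^2 - l1*l2) with hcdef
  have hg : HasDerivAt (fun δ : ℝ =>
      (Ycla ω Cs Cp k δ + (Xcla ω Cs Cp k δ)^2/2
        + Xcla ω Cs Cp k δ * (((Xcla ω Cs Cp k δ)^2/4 + Ycla ω Cs Cp k δ) ^ ((1:ℂ)/2))).re)
      ((-(l1+l2) + c*(l2-l1)).re) 0 := aux_hasDerivAt l1 l2 c
  have hLpos : 0 < (-(l1+l2) + c*(l2-l1)).re := by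
    rw [hcdef, hl1, hl2]
    rw [aux_re_formula a b k hk0.ne']
    have h1 : 0 < 2*a^2*b*(k^2-b^2) := by
      apply mul_pos (by positivity) (by linarith)
    exact div_pos h1 (by positivity)
  have hg0 : (Ycla ω Cs Cp k 0 + (Xcla ω Cs Cp k 0)^2/2
      + Xcla ω Cs Cp k 0 * (((Xcla ω Cs Cp k 0)^2/4 + Ycla ω Cs Cp k 0) ^ ((1:ℂ)/2))).re = 1 := by
    have hX0 : Xcla ω Cs Cp k 0 = 0 := by simp [Xcla]
    have hY0 : Ycla ω Cs Cp k 0 = 1 := by simp [Ycla]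
    rw [hX0, hY0]
    simp
  obtain ⟨δ₀, hδ₀, hmain⟩ := aux_slope hg hg0 hLpos
  refine ⟨δ₀, hδ₀, fun δ hδ hδε => ?_⟩
  refine ⟨Ycla ω Cs Cp k δ + (Xcla ω Cs Cp k δ)^2/2
      + Xcla ω Cs Cp k δ * (((Xcla ω Cs Cp k δ)^2/4 + Ycla ω Cs Cp k δ) ^ ((1:ℂ)/2)), ?_, ?_⟩
  · exact aux_root (Xcla ω Cs Cp k δ) (Ycla ω Cs Cp k δ)
  · calc (1:ℝ) < _ := hmain δ hδ hδε
      _ ≤ _ := Complex.re_le_norm _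
end
end

section
/- Stagnation of the classical Schwarz method at the shear-wave cutoff (Theorem 2.2, k = ω/Cs): at k = ω/Cs one has λ₁ = 0 and λ₂ = ω√(Cp² − Cs²)/(Cp·Cs) > 0, and for every overlap δ > 0 the two roots of the quadratic Q(z) = z² − (X² + 2Y)z + Y² are exactly 1 and e^{−2λ₂δ}; in particular ρ_cla(ω/Cs) = max(1, e^{−2λ₂δ}) = 1 while the second root satisfies 0 < e^{−2λ₂δ} < 1. -/
noncomputable section

open Complex

/-- **Theorem 2.2, k = ω/Cs**: at the shear-wave cutoff one has `λ₁ = 0` and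
`λ₂ = ω√(Cp² − Cs²)/(Cp·Cs) > 0`, and for every overlap `δ > 0` the two roots of
`Q(z) = z² − (X² + 2Y)z + Y²` are exactly `1` and `e^{−2λ₂δ}`; in particular
`ρ_cla(ω/Cs) = max(1, e^{−2λ₂δ}) = 1` while `0 < e^{−2λ₂δ} < 1`. -/
theorem classical_schwarz_shear_cutoff_stagnation
    (ω Cs Cp k δ : ℝ)
    (hω : 0 < ω) (hCs : 0 < Cs) (hCsCp : Cs < Cp) (hCp2 : 2 * Cs ^ 2 < Cp ^ 2)
    (hk : k = ω / Cs) (hδ : 0 < δ) :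
    0 < ω * Real.sqrt (Cp ^ 2 - Cs ^ 2) / (Cp * Cs) ∧
    lam1 ω Cs k = 0 ∧
    lam2 ω Cp k = ((ω * Real.sqrt (Cp ^ 2 - Cs ^ 2) / (Cp * Cs) : ℝ) : ℂ) ∧
    (∀ z : ℂ, Qcla ω Cs Cp k δ z = 0 ↔
      z = 1 ∨
      z = Complex.exp (-2 * ((ω * Real.sqrt (Cp ^ 2 - Cs ^ 2) / (Cp * Cs) : ℝ) : ℂ) * (δ : ℂ))) ∧
    0 < Real.exp (-2 * (ω * Real.sqrt (Cp ^ 2 - Cs ^ 2) / (Cp * Cs)) * δ) ∧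
    Real.exp (-2 * (ω * Real.sqrt (Cp ^ 2 - Cs ^ 2) / (Cp * Cs)) * δ) < 1 := by

  have hCp : 0 < Cp := lt_trans hCs hCsCp
  set L : ℝ := ω * Real.sqrt (Cp ^ 2 - Cs ^ 2) / (Cp * Cs) with hLdef
  have hsub : 0 < Cp ^ 2 - Cs ^ 2 := by nlinarith
  have hL : 0 < L := by
    apply div_pos (mul_pos hω (Real.sqrt_pos.mpr hsub)) (mul_pos hCp hCs)
  have hk0 : k ≠ 0 := by
    rw [hk]; positivity
  have h1 : k ^ 2 - ω ^ 2 / Cs ^ 2 = 0 := by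
    rw [hk]; field_simp; ring
  have hlam1 : lam1 ω Cs k = 0 := by
    rw [lam1, h1, Complex.ofReal_zero, Complex.zero_cpow (by norm_num)]
  have h2 : k ^ 2 - ω ^ 2 / Cp ^ 2 = L ^ 2 := by
    rw [hk, hLdef, div_pow, div_pow, mul_pow, mul_pow,
      Real.sq_sqrt hsub.le]
    field_simp
  have hlam2 : lam2 ω Cp k = (L : ℂ) := by
    rw [lam2, h2]
    rw [show ((1:ℂ)/2) = ((1/2 : ℝ) : ℂ) by norm_num,
      ← Complex.ofReal_cpow (by positivity)]
    congr 1
    rw [← Real.rpow_natCast L 2, ← Real.rpow_mul hL.le]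
    norm_num
  refine ⟨hL, hlam1, hlam2, ?_, Real.exp_pos _, ?_⟩
  · intro z
    have hY : Ycla ω Cs Cp k δ = Complex.exp (-(δ:ℂ) * L) := by
      rw [Ycla, hlam1, hlam2, zero_add]
    have hX : Xcla ω Cs Cp k δ = 1 - Complex.exp (-(L:ℂ) * δ) := by
      rw [Xcla, hlam1, hlam2, zero_mul, add_zero, sub_zero, neg_zero, zero_mul,
        Complex.exp_zero,
        div_self (by exact_mod_cast pow_ne_zero 2 (Complex.ofReal_ne_zero.mpr hk0)), one_mul]
    have hfac : Qcla ω Cs Cp k δ z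
        = (z - 1) * (z - Complex.exp (-2 * (L:ℂ) * δ)) := by
      rw [Qcla, hX, hY]
      have e1 : Complex.exp (-2 * (L:ℂ) * δ) = Complex.exp (-(L:ℂ)*δ) * Complex.exp (-(δ:ℂ)*L) := by
        rw [← Complex.exp_add]; ring_nf
      have e2 : Complex.exp (-(L:ℂ)*δ) = Complex.exp (-(δ:ℂ)*L) := by ring_nf
      rw [e1, e2]
      ring
    rw [hfac, mul_eq_zero, sub_eq_zero, sub_eq_zero]
  · rw [Real.exp_lt_one_iff]
    nlinarith


end
end

section
/- High-frequency contraction of the classical Schwarz method (Theorem 2.2, last case): for every fixed Fourier frequency k with k > ω/Cs (so that λ₁ = √(k² − ω²/Cs²) > 0 and λ₂ = √(k² − ω²/Cp²) > 0 are real, and k² − λ₁λ₂ > 0), there exists δ₀ > 0 such that for all overlaps δ with 0 < δ < δ₀, both roots of the quadratic Q(z) = z² − (X² + 2Y)z + Y² are real and lie in the open interval (0, 1); hence ρ_cla(k) < 1. -/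
noncomputable section

open Complex

lemma cpow_half_ofReal (x : ℝ) (hx : 0 ≤ x) :
    ((x:ℂ)) ^ ((1:ℂ)/2) = (Real.sqrt x : ℂ) := by
  rw [show ((1:ℂ)/2) = ((1/2 : ℝ) : ℂ) by norm_num, ← Complex.ofReal_cpow hx,
    ← Real.sqrt_eq_rpow]

/-- `e^{-aδ} - e^{-bδ} ≤ (b-a)δ` for `0 ≤ a ≤ b`, `0 ≤ δ`. -/
lemma exp_diff_le (a b δ : ℝ) (ha : 0 ≤ a) (hab : a ≤ b) (hδ : 0 ≤ δ) :
    Real.exp (-(a * δ)) - Real.exp (-(b * δ)) ≤ (b - a) * δ := by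
  have he : Real.exp (-(b * δ)) = Real.exp (-(a * δ)) * Real.exp (-((b - a) * δ)) := by
    rw [← Real.exp_add]; ring_nf
  have h2 : -((b - a) * δ) + 1 ≤ Real.exp (-((b - a) * δ)) := Real.add_one_le_exp _
  have h3 : Real.exp (-(a * δ)) ≤ 1 := Real.exp_le_one_iff.mpr (by nlinarith)
  have h4 : 0 < Real.exp (-(a * δ)) := Real.exp_pos _
  have h5 : Real.exp (-(a * δ)) * (-((b - a) * δ) + 1)
      ≤ Real.exp (-(a * δ)) * Real.exp (-((b - a) * δ)) :=
    mul_le_mul_of_nonneg_left h2 h4.le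
  have h6 : Real.exp (-(a * δ)) * ((b - a) * δ) ≤ (b - a) * δ := by
    simpa using mul_le_mul_of_nonneg_right h3 (mul_nonneg (by linarith) hδ)
  nlinarith

/-- `e^{-s}(1+s) ≤ 1` for `0 ≤ s`. -/
lemma exp_neg_mul_le (s : ℝ) (hs : 0 ≤ s) : Real.exp (-s) * (1 + s) ≤ 1 := by
  have h5 : 1 + s ≤ Real.exp s := by linarith [Real.add_one_le_exp s]
  have h6 : Real.exp (-s) * Real.exp s = 1 := by
    rw [← Real.exp_add, neg_add_cancel, Real.exp_zero]
  have h4 : 0 < Real.exp (-s) := Real.exp_pos _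
  nlinarith

/-- small algebraic step: `C(b-a)δ (1+(a+b)δ) < (a+b)δ` when `δ(C(b-a)(a+b)) < (a+b) - C(b-a)`. -/
lemma alg_step (C ba ab δ : ℝ) (hC : 0 < C) (hba : 0 < ba) (hab : 0 < ab) (hδ : 0 < δ)
    (h : δ * (C * ba * ab) < ab - C * ba) :
    (C * (ba * δ)) * (1 + ab * δ) < ab * δ := by
  have hq := mul_lt_mul_of_pos_left h hδ
  nlinarith

/-- Both roots of `z² - (X²+2Y)z + Y²` are real and in `(0,1)` when
`0 < X`, `0 < Y` and `X < 1 - Y`. -/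
lemma roots_in_unit_interval (X Y : ℝ) (hX : 0 < X) (hY : 0 < Y) (hXY : X < 1 - Y) :
    ∃ rp rm : ℝ, rp + rm = X ^ 2 + 2 * Y ∧ rp * rm = Y ^ 2 ∧
      0 < rm ∧ rm ≤ rp ∧ rp < 1 := by
  have hY1 : Y < 1 := by linarith
  have hX1 : X < 1 := by linarith
  set S := X ^ 2 + 2 * Y with hS_def
  set P := Y ^ 2 with hP_def
  have hSpos : 0 < S := by positivity
  have hPpos : 0 < P := by positivity
  have hD : 0 ≤ S ^ 2 - 4 * P := by nlinarith [sq_nonneg X]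
  set sd := Real.sqrt (S ^ 2 - 4 * P) with hsd_def
  have hsd0 : 0 ≤ sd := Real.sqrt_nonneg _
  have hsdsq : sd ^ 2 = S ^ 2 - 4 * P := Real.sq_sqrt hD
  refine ⟨(S + sd) / 2, (S - sd) / 2, by ring, ?_, ?_, by linarith, ?_⟩
  · have : (S + sd) / 2 * ((S - sd) / 2) = (S ^ 2 - sd ^ 2) / 4 := by ring
    rw [this, hsdsq]; ring
  · have h9 : S ^ 2 - 4 * P < S ^ 2 := by nlinarith
    have hsdS : sd < S := by
      calc sd = Real.sqrt (S ^ 2 - 4 * P) := hsd_def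
      _ < Real.sqrt (S ^ 2) := Real.sqrt_lt_sqrt hD h9
      _ = S := Real.sqrt_sq hSpos.le
    linarith
  · have hS2 : S < 2 := by nlinarith
    have h7 : S ^ 2 - 4 * P < (2 - S) ^ 2 := by nlinarith
    have h8 : sd < 2 - S := by
      calc sd = Real.sqrt (S ^ 2 - 4 * P) := hsd_def
      _ < Real.sqrt ((2 - S) ^ 2) := Real.sqrt_lt_sqrt hD h7
      _ = 2 - S := Real.sqrt_sq (by linarith)
    linarith

set_option maxHeartbeats 1000000 in
/-- **Theorem 2.2, last case**: for every frequency `k > ω/Cs` there is `δ₀ > 0` such that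
for all overlaps `0 < δ < δ₀`, both roots of `Q(z) = z² − (X² + 2Y)z + Y²` are real and lie
in the open interval `(0, 1)`; hence `ρ_cla(k) < 1`. -/
theorem classical_schwarz_high_frequency_contraction
    (ω Cs Cp k : ℝ)
    (hω : 0 < ω) (hCs : 0 < Cs) (hCsCp : Cs < Cp) (hCp2 : 2 * Cs ^ 2 < Cp ^ 2)
    (hk : ω / Cs < k) :
    ∃ δ₀ > 0, ∀ δ : ℝ, 0 < δ → δ < δ₀ →
      ∀ z : ℂ, Qcla ω Cs Cp k δ z = 0 →
        ∃ x : ℝ, z = (x : ℂ) ∧ 0 < x ∧ x < 1 := by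
  have hCp : 0 < Cp := lt_trans hCs hCsCp
  have hk0 : 0 < k := lt_trans (div_pos hω hCs) hk
  have ha2 : 0 < k ^ 2 - ω ^ 2 / Cs ^ 2 := by
    have h1 : (ω / Cs) ^ 2 < k ^ 2 :=
      pow_lt_pow_left₀ hk (le_of_lt (div_pos hω hCs)) (by norm_num)
    rw [div_pow] at h1; linarith
  have hCpCs : ω ^ 2 / Cp ^ 2 < ω ^ 2 / Cs ^ 2 := by
    apply div_lt_div_of_pos_left (by positivity) (by positivity)
    exact pow_lt_pow_left₀ hCsCp hCs.le (by norm_num)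
  have hb2 : 0 < k ^ 2 - ω ^ 2 / Cp ^ 2 := by linarith
  set a := Real.sqrt (k ^ 2 - ω ^ 2 / Cs ^ 2) with ha_def
  set b := Real.sqrt (k ^ 2 - ω ^ 2 / Cp ^ 2) with hb_def
  clear_value a b
  have ha : 0 < a := by rw [ha_def]; exact Real.sqrt_pos.mpr ha2
  have hb : 0 < b := by rw [hb_def]; exact Real.sqrt_pos.mpr hb2
  have hasq : a ^ 2 = k ^ 2 - ω ^ 2 / Cs ^ 2 := by rw [ha_def]; exact Real.sq_sqrt ha2.le
  have hbsq : b ^ 2 = k ^ 2 - ω ^ 2 / Cp ^ 2 := by rw [hb_def]; exact Real.sq_sqrt hb2.le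
  have hab : a < b := by
    rw [ha_def, hb_def]; exact Real.sqrt_lt_sqrt ha2.le (by linarith)
  have hbk : b < k := by
    have hq : 0 < ω ^ 2 / Cp ^ 2 := by positivity
    nlinarith [hbsq]
  have habk : a * b < k ^ 2 := by nlinarith
  have hlam1 : lam1 ω Cs k = (a : ℂ) := by
    rw [lam1, cpow_half_ofReal _ ha2.le, ha_def]
  have hlam2 : lam2 ω Cp k = (b : ℂ) := by
    rw [lam2, cpow_half_ofReal _ hb2.le, hb_def]
  clear ha_def hb_def hCpCs ha2 hb2 hk hCp2 hCsCp hω hCs hCp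
  set C := (k ^ 2 + a * b) / (k ^ 2 - a * b) with hC_def
  clear_value C
  have hden : 0 < k ^ 2 - a * b := by linarith
  have hC : 0 < C := by rw [hC_def]; exact div_pos (by nlinarith) hden
  have hCba : C * (b - a) < a + b := by
    rw [hC_def, div_mul_eq_mul_div, div_lt_iff₀ hden]
    nlinarith [hbsq, mul_pos ha (sub_pos.mpr (show b ^ 2 < k ^ 2 by nlinarith))]
  clear hasq hbsq hbk habk hden hk0
  have hdenpos : 0 < C * (b - a) * (a + b) :=
    mul_pos (mul_pos hC (by linarith)) (by linarith)
  refine ⟨((a + b) - C * (b - a)) / (C * (b - a) * (a + b)), div_pos (by linarith) hdenpos, ?_⟩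
  intro δ hδ hδlt z hz
  set Xr := C * (Real.exp (-(a * δ)) - Real.exp (-(b * δ))) with hXr_def
  set Yr := Real.exp (-(δ * (a + b))) with hYr_def
  clear_value Xr Yr
  have hYpos : 0 < Yr := by rw [hYr_def]; exact Real.exp_pos _
  have hXpos : 0 < Xr := by
    rw [hXr_def]
    apply mul_pos hC
    have : Real.exp (-(b * δ)) < Real.exp (-(a * δ)) := by
      apply Real.exp_lt_exp.mpr; nlinarith
    linarith
  -- key inequality Xr < 1 - Yr
  have hkey : Xr < 1 - Yr := by
    have h1 : Real.exp (-(a * δ)) - Real.exp (-(b * δ)) ≤ (b - a) * δ :=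
      exp_diff_le a b δ ha.le hab.le hδ.le
    have hYs : Yr * (1 + (a + b) * δ) ≤ 1 := by
      rw [hYr_def, show -(δ * (a + b)) = -((a + b) * δ) by ring]
      exact exp_neg_mul_le _ (by positivity)
    have hδ' : δ * (C * (b - a) * (a + b)) < (a + b) - C * (b - a) :=
      (lt_div_iff₀ hdenpos).mp hδlt
    have hm : (C * ((b - a) * δ)) * (1 + (a + b) * δ) < (a + b) * δ :=
      alg_step C (b - a) (a + b) δ hC (by linarith) (by linarith) hδ hδ'
    have hXle : Xr * (1 + (a + b) * δ) ≤ (C * ((b - a) * δ)) * (1 + (a + b) * δ) := by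
      apply mul_le_mul_of_nonneg_right _ (by positivity)
      rw [hXr_def]
      exact mul_le_mul_of_nonneg_left h1 hC.le
    have hs : 0 < (a + b) * δ := by positivity
    have hfin : Xr * (1 + (a + b) * δ) < (1 - Yr) * (1 + (a + b) * δ) := by
      have h10 : (a + b) * δ ≤ (1 - Yr) * (1 + (a + b) * δ) := by nlinarith
      linarith
    exact lt_of_mul_lt_mul_right hfin (by positivity)
  -- identify Xcla and Ycla with the real values
  have hXc : Xcla ω Cs Cp k δ = (Xr : ℂ) := by
    rw [Xcla, hlam1, hlam2]
    rw [show (-(a:ℂ)) * (δ:ℂ) = ((-(a * δ) : ℝ) : ℂ) by push_cast; ring,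
        show (-(b:ℂ)) * (δ:ℂ) = ((-(b * δ) : ℝ) : ℂ) by push_cast; ring,
        ← Complex.ofReal_exp, ← Complex.ofReal_exp, hXr_def, hC_def]
    push_cast
    ring
  have hYc : Ycla ω Cs Cp k δ = (Yr : ℂ) := by
    rw [Ycla, hlam1, hlam2]
    rw [show -(δ:ℂ) * ((a:ℂ) + (b:ℂ)) = ((-(δ * (a + b)) : ℝ) : ℂ) by push_cast; ring,
        ← Complex.ofReal_exp, hYr_def]
  obtain ⟨rp, rm, hsum, hprod, hrm0, hrmrp, hrp1⟩ :=
    roots_in_unit_interval Xr Yr hXpos hYpos hkey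
  have hfac : Qcla ω Cs Cp k δ z = (z - (rp : ℂ)) * (z - (rm : ℂ)) := by
    rw [Qcla, hXc, hYc]
    have e1 : ((rp : ℝ) : ℂ) + ((rm : ℝ) : ℂ) = ((Xr : ℝ) : ℂ) ^ 2 + 2 * ((Yr : ℝ) : ℂ) := by
      rw [← Complex.ofReal_add, hsum]; push_cast; ring
    have e2 : ((rp : ℝ) : ℂ) * ((rm : ℝ) : ℂ) = ((Yr : ℝ) : ℂ) ^ 2 := by
      rw [← Complex.ofReal_mul, hprod]; push_cast; ring
    have e3 : (z - (rp : ℂ)) * (z - (rm : ℂ))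
        = z ^ 2 - (((rp : ℝ) : ℂ) + ((rm : ℝ) : ℂ)) * z + ((rp : ℝ) : ℂ) * ((rm : ℝ) : ℂ) := by
      ring
    rw [e3, e1, e2]
  rw [hfac] at hz
  rcases mul_eq_zero.mp hz with h | h
  · exact ⟨rp, sub_eq_zero.mp h, lt_of_lt_of_le hrm0 hrmrp, hrp1⟩
  · exact ⟨rm, sub_eq_zero.mp h, hrm0, lt_of_le_of_lt hrmrp hrp1⟩

end
end

section
/- Low-frequency contraction for Taylor transmission conditions without overlap (Theorem 3.3, first case): for every Fourier frequency k with 0 < k < ω/Cp (so λ₁ and λ₂ are purely imaginary with positive imaginary parts), both roots of the quadratic Q₀(z) = z² − (X₀² + 2Y₀)z + Y₀² have modulus strictly less than 1; hence the non-overlapping Schwarz method with zeroth-order Taylor transmission conditions converges on these frequencies. -/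
noncomputable section

lemma neg_cpow_half (r : ℝ) (hr : r < 0) :
    ((r : ℂ)) ^ ((1:ℂ)/2) = Complex.I * (Real.sqrt (-r) : ℂ) := by
  rw [Complex.ofReal_cpow_of_nonpos hr.le]
  rw [show ((-(r:ℂ))) = ((-r : ℝ) : ℂ) by push_cast; ring]
  rw [show ((1:ℂ)/2) = (((1/2 : ℝ):ℝ) : ℂ) by norm_num]
  rw [← Complex.ofReal_cpow (by linarith) (1/2 : ℝ)]
  rw [← Real.sqrt_eq_rpow]
  rw [show (Real.pi : ℂ) * Complex.I * (((1/2:ℝ)):ℂ) = ((Real.pi/2 : ℝ) : ℂ) * Complex.I by push_cast; ring]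
  rw [Complex.exp_mul_I]
  rw [← Complex.ofReal_cos, ← Complex.ofReal_sin, Real.cos_pi_div_two, Real.sin_pi_div_two]
  push_cast; ring

lemma quad_root_abs_lt_one (p q : ℝ) (hq : |q| < 1) (hp : |p| < 1 + q)
    (z : ℂ) (hz : z ^ 2 - (p : ℂ) * z + (q : ℂ) = 0) : ‖z‖ < 1 := by
  set a := z.re with ha'
  set b := z.im with hb'
  have ha : a ^ 2 - b ^ 2 - p * a + q = 0 := by
    have := congrArg Complex.re hz
    simpa [pow_two, Complex.mul_re, Complex.ofReal_re, Complex.ofReal_im, ← ha', ← hb',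
      sub_eq_iff_eq_add, pow_two] using this
  have hb : b * (2 * a - p) = 0 := by
    have := congrArg Complex.im hz
    simp [pow_two, Complex.mul_im, Complex.ofReal_re, Complex.ofReal_im, ← ha', ← hb'] at this
    linarith
  rcases mul_eq_zero.mp hb with hb0 | hab
  · have hzr : z = (a : ℂ) := Complex.ext rfl (by simpa using hb0)
    rw [hzr, Complex.norm_real, Real.norm_eq_abs]
    by_contra hcon
    push_neg at hcon
    have ha2 : a ^ 2 - p * a + q = 0 := by rw [hb0] at ha; linarith [ha]
    have h1 : |p| * |a| < (1 + q) * |a| :=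
      mul_lt_mul_of_pos_right hp (lt_of_lt_of_le one_pos hcon)
    have h2 : p * a ≤ |p| * |a| := by
      calc p * a ≤ |p * a| := le_abs_self _
      _ = |p| * |a| := abs_mul _ _
    have h3 : a ^ 2 = |a| ^ 2 := (_root_.sq_abs a).symm
    have h4 : (|a| - 1) * (|a| - q) ≥ 0 := by
      apply mul_nonneg <;> nlinarith [abs_lt.mp hq]
    nlinarith
  · have hpa : p = 2 * a := by linarith
    have hq2 : q = a ^ 2 + b ^ 2 := by rw [hpa] at ha; nlinarith
    have habs : ‖z‖ ^ 2 = a ^ 2 + b ^ 2 := by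
      rw [Complex.sq_norm, Complex.normSq_apply]; ring
    nlinarith [norm_nonneg z, abs_lt.mp hq]


open Complex

/-- `Z₁ = Cs³(k² + λ₁²)² + ω²Cp·k²`. -/
def Z1 (ω Cs Cp k : ℝ) : ℂ :=
  (Cs : ℂ) ^ 3 * ((k : ℂ) ^ 2 + (lam1 ω Cs k) ^ 2) ^ 2 + (ω : ℂ) ^ 2 * (Cp : ℂ) * (k : ℂ) ^ 2

/-- `Z₂ = (4Cs³k² + Cpω²)λ₁λ₂`. -/
def Z2 (ω Cs Cp k : ℝ) : ℂ :=
  (4 * (Cs : ℂ) ^ 3 * (k : ℂ) ^ 2 + (Cp : ℂ) * (ω : ℂ) ^ 2) * lam1 ω Cs k * lam2 ω Cp k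

/-- `K = 2k(Cpω² + 2Cs³(k² + λ₁²))`. -/
def Kq (ω Cs Cp k : ℝ) : ℂ :=
  2 * (k : ℂ) * ((Cp : ℂ) * (ω : ℂ) ^ 2 + 2 * (Cs : ℂ) ^ 3 * ((k : ℂ) ^ 2 + (lam1 ω Cs k) ^ 2))

/-- `D = −Z₁ + Z₂ + iω³(λ₁ + λ₂Cp/Cs)`. -/
def Dq (ω Cs Cp k : ℝ) : ℂ :=
  -Z1 ω Cs Cp k + Z2 ω Cs Cp k +
    Complex.I * (ω : ℂ) ^ 3 * (lam1 ω Cs k + lam2 ω Cp k * (Cp : ℂ) / (Cs : ℂ))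

/-- `b₁₁ = (−Z₁ − Z₂ − iω³(λ₁ − λ₂Cp/Cs))/D`. -/
def b11 (ω Cs Cp k : ℝ) : ℂ :=
  (-Z1 ω Cs Cp k - Z2 ω Cs Cp k -
    Complex.I * (ω : ℂ) ^ 3 * (lam1 ω Cs k - lam2 ω Cp k * (Cp : ℂ) / (Cs : ℂ))) / Dq ω Cs Cp k

/-- `b₁₂ = iλ₂K/D`. -/
def b12 (ω Cs Cp k : ℝ) : ℂ :=
  Complex.I * lam2 ω Cp k * Kq ω Cs Cp k / Dq ω Cs Cp k

/-- `b₂₁ = −iλ₁K/D`. -/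
def b21 (ω Cs Cp k : ℝ) : ℂ :=
  -Complex.I * lam1 ω Cs k * Kq ω Cs Cp k / Dq ω Cs Cp k

/-- `b₂₂ = (−Z₁ − Z₂ + iω³(λ₁ − λ₂Cp/Cs))/D`. -/
def b22 (ω Cs Cp k : ℝ) : ℂ :=
  (-Z1 ω Cs Cp k - Z2 ω Cs Cp k +
    Complex.I * (ω : ℂ) ^ 3 * (lam1 ω Cs k - lam2 ω Cp k * (Cp : ℂ) / (Cs : ℂ))) / Dq ω Cs Cp k

/-- `X_δ = e^{−λ₁δ}b₁₁ − e^{−λ₂δ}b₂₂`. -/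
def Xd (ω Cs Cp k δ : ℝ) : ℂ :=
  Complex.exp (-(lam1 ω Cs k) * (δ : ℂ)) * b11 ω Cs Cp k -
    Complex.exp (-(lam2 ω Cp k) * (δ : ℂ)) * b22 ω Cs Cp k

/-- `Y_δ = e^{−(λ₁+λ₂)δ}(b₁₁b₂₂ − b₁₂b₂₁)`. -/
def Yd (ω Cs Cp k δ : ℝ) : ℂ :=
  Complex.exp (-(lam1 ω Cs k + lam2 ω Cp k) * (δ : ℂ)) *
    (b11 ω Cs Cp k * b22 ω Cs Cp k - b12 ω Cs Cp k * b21 ω Cs Cp k)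

/-- The quadratic `Q_δ(z) = z² − (X_δ² + 2Y_δ)z + Y_δ²` whose roots are the eigenvalues `r±`
of the double-iteration operator of the Schwarz method with zeroth-order Taylor
transmission conditions. -/
def Qd (ω Cs Cp k δ : ℝ) (z : ℂ) : ℂ :=
  z ^ 2 - ((Xd ω Cs Cp k δ) ^ 2 + 2 * Yd ω Cs Cp k δ) * z + (Yd ω Cs Cp k δ) ^ 2

set_option maxHeartbeats 1000000 in
/-- **Theorem 3.3, first case**: for `0 < k < ω/Cp`, both roots of
`Q₀(z) = z² − (X₀² + 2Y₀)z + Y₀²` have modulus strictly less than `1`; the non-overlapping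
Schwarz method with zeroth-order Taylor transmission conditions converges on these
frequencies. -/
theorem taylor_nonoverlapping_low_frequency_contraction
    (ω Cs Cp k : ℝ)
    (hω : 0 < ω) (hCs : 0 < Cs) (hCsCp : Cs < Cp) (hCp2 : 2 * Cs ^ 2 < Cp ^ 2)
    (hk0 : 0 < k) (hk : k < ω / Cp)
    (hD : Dq ω Cs Cp k ≠ 0) :
    ∀ z : ℂ, Qd ω Cs Cp k 0 z = 0 → ‖z‖ < 1 := by
  intro z hz
  have hCp : 0 < Cp := lt_trans hCs hCsCp
  have h1' : k * Cp < ω := (lt_div_iff₀ hCp).mp hk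
  have h2' : k * Cp * (k * Cp) < ω * ω := by nlinarith [mul_pos hk0 hCp]
  have hkCp : k ^ 2 < ω ^ 2 / Cp ^ 2 := by
    rw [lt_div_iff₀ (by positivity)]; nlinarith
  have hkCs : k ^ 2 < ω ^ 2 / Cs ^ 2 := by
    have hCs2 : Cs ^ 2 < Cp ^ 2 := by nlinarith
    rw [lt_div_iff₀ (by positivity)]; nlinarith [mul_pos hk0 hk0]
  set x1 : ℝ := Real.sqrt (ω ^ 2 / Cs ^ 2 - k ^ 2) with hx1def
  set x2 : ℝ := Real.sqrt (ω ^ 2 / Cp ^ 2 - k ^ 2) with hx2def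
  have hx1 : 0 < x1 := Real.sqrt_pos.mpr (by linarith)
  have hx2 : 0 < x2 := Real.sqrt_pos.mpr (by linarith)
  have hx1sq : x1 ^ 2 = ω ^ 2 / Cs ^ 2 - k ^ 2 := by
    rw [hx1def]; exact Real.sq_sqrt (by linarith)
  have hx2sq : x2 ^ 2 = ω ^ 2 / Cp ^ 2 - k ^ 2 := by
    rw [hx2def]; exact Real.sq_sqrt (by linarith)
  have h1 : lam1 ω Cs k = Complex.I * (x1 : ℂ) := by
    rw [lam1, neg_cpow_half _ (by linarith), show -(k ^ 2 - ω ^ 2 / Cs ^ 2) = ω ^ 2 / Cs ^ 2 - k ^ 2 by ring, ← hx1def]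
  have h2 : lam2 ω Cp k = Complex.I * (x2 : ℂ) := by
    rw [lam2, neg_cpow_half _ (by linarith), show -(k ^ 2 - ω ^ 2 / Cp ^ 2) = ω ^ 2 / Cp ^ 2 - k ^ 2 by ring, ← hx2def]
  have hx1c : ((x1 : ℝ) : ℂ) ^ 2 = (ω : ℂ) ^ 2 / (Cs : ℂ) ^ 2 - (k : ℂ) ^ 2 := by
    rw [← Complex.ofReal_pow, hx1sq]; push_cast; ring
  have hA : (k : ℂ) ^ 2 + (lam1 ω Cs k) ^ 2 = ((2 * k ^ 2 - ω ^ 2 / Cs ^ 2 : ℝ) : ℂ) := by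
    rw [h1]; push_cast
    linear_combination ((x1 : ℝ) : ℂ) ^ 2 * Complex.I_sq - hx1c
  set A : ℝ := Cs ^ 3 * (2 * k ^ 2 - ω ^ 2 / Cs ^ 2) ^ 2 + ω ^ 2 * Cp * k ^ 2 with hAdef
  set G : ℝ := (4 * Cs ^ 3 * k ^ 2 + Cp * ω ^ 2) * x1 * x2 with hGdef
  set V : ℝ := ω ^ 3 * (x1 + x2 * Cp / Cs) with hVdef
  set T : ℝ := ω ^ 3 * (x1 - x2 * Cp / Cs) with hTdef
  set Kr : ℝ := 2 * k * (Cp * ω ^ 2 + 2 * Cs ^ 3 * (2 * k ^ 2 - ω ^ 2 / Cs ^ 2)) with hKdef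
  have hZ1 : Z1 ω Cs Cp k = ((A : ℝ) : ℂ) := by
    rw [Z1, hA, hAdef]; push_cast; ring
  have hZ2 : Z2 ω Cs Cp k = ((-G : ℝ) : ℂ) := by
    rw [Z2, h1, h2, hGdef]; push_cast
    linear_combination ((4 * (Cs:ℂ) ^ 3 * (k:ℂ) ^ 2 + (Cp:ℂ) * (ω:ℂ) ^ 2) * (x1:ℂ) * (x2:ℂ)) * Complex.I_sq
  have hKq : Kq ω Cs Cp k = ((Kr : ℝ) : ℂ) := by
    rw [Kq, hA, hKdef]; push_cast; ring
  have hDq : Dq ω Cs Cp k = ((-(A + G + V) : ℝ) : ℂ) := by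
    rw [Dq, hZ1, hZ2, h1, h2, hVdef]; push_cast
    linear_combination ((ω:ℂ) ^ 3 * ((x1:ℂ) + (x2:ℂ) * (Cp:ℂ) / (Cs:ℂ))) * Complex.I_sq
  have e11 : -Z1 ω Cs Cp k - Z2 ω Cs Cp k -
      Complex.I * (ω : ℂ) ^ 3 * (lam1 ω Cs k - lam2 ω Cp k * (Cp : ℂ) / (Cs : ℂ)) =
      ((-A + G + T : ℝ) : ℂ) := by
    rw [hZ1, hZ2, h1, h2, hTdef]; push_cast
    linear_combination (-(ω:ℂ) ^ 3 * ((x1:ℂ) - (x2:ℂ) * (Cp:ℂ) / (Cs:ℂ))) * Complex.I_sq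
  have e22 : -Z1 ω Cs Cp k - Z2 ω Cs Cp k +
      Complex.I * (ω : ℂ) ^ 3 * (lam1 ω Cs k - lam2 ω Cp k * (Cp : ℂ) / (Cs : ℂ)) =
      ((-A + G - T : ℝ) : ℂ) := by
    rw [hZ1, hZ2, h1, h2, hTdef]; push_cast
    linear_combination ((ω:ℂ) ^ 3 * ((x1:ℂ) - (x2:ℂ) * (Cp:ℂ) / (Cs:ℂ))) * Complex.I_sq
  have e12 : Complex.I * lam2 ω Cp k * Kq ω Cs Cp k = ((-(x2 * Kr) : ℝ) : ℂ) := by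
    rw [h2, hKq]; push_cast
    linear_combination ((x2:ℂ) * (Kr:ℂ)) * Complex.I_sq
  have e21 : -Complex.I * lam1 ω Cs k * Kq ω Cs Cp k = ((x1 * Kr : ℝ) : ℂ) := by
    rw [h1, hKq]; push_cast
    linear_combination (-(x1:ℂ) * (Kr:ℂ)) * Complex.I_sq
  have hA0 : 0 < A := by rw [hAdef]; positivity
  have hG0 : 0 ≤ G := by rw [hGdef]; positivity
  have hV0 : 0 < V := by rw [hVdef]; positivity
  have hP : 0 < A + G + V := by linarith
  have hDrne : ((-(A + G + V) : ℝ) : ℂ) ≠ 0 :=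
    Complex.ofReal_ne_zero.mpr (by linarith)
  have hPne : (((A + G + V) ^ 2 : ℝ) : ℂ) ≠ 0 :=
    Complex.ofReal_ne_zero.mpr (by positivity)
  have hT2 : T ^ 2 < V ^ 2 := by
    have h4 : 0 < 4 * ω ^ 6 * (x1 * (x2 * (Cp / Cs))) := by positivity
    have h5 : (ω ^ 3 * (x1 + x2 * Cp / Cs)) ^ 2 - (ω ^ 3 * (x1 - x2 * Cp / Cs)) ^ 2
        = 4 * ω ^ 6 * (x1 * (x2 * (Cp / Cs))) := by ring
    rw [hTdef, hVdef]; linarith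
  set Xr : ℝ := 2 * T / (-(A + G + V)) with hXrdef
  set Yr : ℝ := ((-A + G) ^ 2 - T ^ 2 + x1 * x2 * Kr ^ 2) / (A + G + V) ^ 2 with hYrdef
  have hX : Xd ω Cs Cp k 0 = ((Xr : ℝ) : ℂ) := by
    rw [Xd, b11, b22, e11, e22, hDq]
    simp only [Complex.ofReal_zero, mul_zero, Complex.exp_zero, one_mul]
    rw [div_sub_div_same, hXrdef, Complex.ofReal_div]
    rw [div_eq_div_iff hDrne hDrne]
    push_cast; ring
  have hY : Yd ω Cs Cp k 0 = ((Yr : ℝ) : ℂ) := by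
    rw [Yd, b11, b22, b12, b21, e11, e22, e12, e21, hDq]
    simp only [Complex.ofReal_zero, mul_zero, Complex.exp_zero, one_mul]
    rw [div_mul_div_comm, div_mul_div_comm, div_sub_div_same, hYrdef, Complex.ofReal_div]
    rw [div_eq_div_iff (mul_ne_zero hDrne hDrne) hPne]
    push_cast; ring
  have hKid : Kr ^ 2 = 4 * (Cs ^ 3 * (2 * k ^ 2 - ω ^ 2 / Cs ^ 2) ^ 2 + ω ^ 2 * Cp * k ^ 2) *
      (4 * Cs ^ 3 * k ^ 2 + Cp * ω ^ 2) - 4 * ω ^ 6 * Cp / Cs := by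
    rw [hKdef]; field_simp; ring
  have hnum : (-A + G) ^ 2 - T ^ 2 + x1 * x2 * Kr ^ 2 = (A + G) ^ 2 - V ^ 2 := by
    rw [hAdef, hGdef, hTdef, hVdef]
    linear_combination (x1 * x2) * hKid
  have hYr : Yr = ((A + G) ^ 2 - V ^ 2) / (A + G + V) ^ 2 := by
    rw [hYrdef, hnum]
  have hXr2 : Xr = -(2 * T) / (A + G + V) := by rw [hXrdef, div_neg, neg_div]
  clear_value x1 x2 A G V T Kr Xr Yr
  clear h1 h2 hx1c hA hZ1 hZ2 hKq hDq e11 e22 e12 e21 hKid hnum hDrne hPne hx1sq hx2sq hx1def hx2def hXrdef hYrdef hAdef hGdef hVdef hTdef hKdef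
  have hAG : 0 < A + G := by linarith
  have hm1 : 0 < (A + G) * (A + G + V) := mul_pos hAG hP
  have hm2 : 0 < (A + G) * V := mul_pos hAG hV0
  have hm3 : 0 < V * V := mul_pos hV0 hV0
  have hYlt : |Yr| < 1 := by
    rw [hYr, abs_lt]
    constructor
    · rw [lt_div_iff₀ (pow_pos hP 2)]
      have hr1 : (A + G) ^ 2 - V ^ 2 - (-1) * (A + G + V) ^ 2 = 2 * ((A + G) * (A + G + V)) := by
        ring
      linarith
    · rw [div_lt_one (pow_pos hP 2)]
      have hr2 : (A + G + V) ^ 2 - ((A + G) ^ 2 - V ^ 2) = 2 * ((A + G) * V) + 2 * (V * V) := by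
        ring
      linarith
  have habsT : |2 * T| < 2 * V := by
    have hTV : |T| < V := abs_lt_of_sq_lt_sq hT2 hV0.le
    calc |2 * T| = 2 * |T| := by rw [abs_mul]; norm_num
    _ < 2 * V := by linarith
  have hXlt : |Xr| < 1 - Yr := by
    have h1Y : 1 - Yr = 2 * V / (A + G + V) := by
      rw [hYr]; field_simp; ring
    rw [hXr2, h1Y, abs_div, abs_neg, abs_of_pos hP, div_lt_div_iff₀ hP hP]
    exact mul_lt_mul_of_pos_right habsT hP
  have hq : |Yr ^ 2| < 1 := by
    have eY : Yr ^ 2 = |Yr| * |Yr| := by rw [abs_mul_abs_self]; ring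
    have eY2 : |Yr| * |Yr| < 1 * 1 := mul_self_lt_mul_self (abs_nonneg Yr) hYlt
    rw [_root_.abs_of_nonneg (_root_.sq_nonneg Yr)]
    linarith
  have hYabs := abs_lt.mp hYlt
  have hp : |Xr ^ 2 + 2 * Yr| < 1 + Yr ^ 2 := by
    rw [abs_lt]
    have h1Y' : (0:ℝ) < 1 + Yr := by linarith
    constructor
    · have h5 : (Xr ^ 2 + 2 * Yr) - (-(1 + Yr ^ 2)) = (1 + Yr) * (1 + Yr) + Xr ^ 2 := by ring
      linarith [sq_nonneg Xr, mul_pos h1Y' h1Y']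
    · have e1 : Xr ^ 2 = |Xr| * |Xr| := by rw [abs_mul_abs_self]; ring
      have e2 : |Xr| * |Xr| < (1 - Yr) * (1 - Yr) :=
        mul_self_lt_mul_self (abs_nonneg Xr) hXlt
      have e3 : (1 - Yr) * (1 - Yr) = 1 - 2 * Yr + Yr ^ 2 := by ring
      linarith
  rw [Qd, hX, hY] at hz
  exact quad_root_abs_lt_one (Xr ^ 2 + 2 * Yr) (Yr ^ 2) hq hp z (by push_cast; linear_combination hz)


end
end

section
/- Behavior of Taylor transmission conditions without overlap at the pressure-wave cutoff (Theorem 3.3, k = ω/Cp): at k = ω/Cp one has λ₂ = 0 and λ₁ = i·ω√(Cp² − Cs²)/(Cp·Cs), the matrix entries satisfy b₁₂ = 0 and b₂₂ = 1, the two roots of the quadratic Q₀(z) = z² − (X₀² + 2Y₀)z + Y₀² are exactly 1 and b₁₁², and |b₁₁| < 1; hence max(|r₊|, |r₋|) = 1 and the non-overlapping method stagnates exactly at this frequency. -/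
noncomputable section

open Complex

lemma neg_sq_cpow_half {a : ℝ} (ha : 0 < a) :
    ((-(a ^ 2) : ℝ) : ℂ) ^ ((1 : ℂ) / 2) = Complex.I * (a : ℂ) := by
  rw [Complex.ofReal_cpow_of_nonpos (neg_nonpos.mpr (sq_nonneg a))]
  have key : (-(((-(a ^ 2)) : ℝ) : ℂ)) = ((a ^ 2 : ℝ) : ℂ) := by push_cast; ring
  have h2 : ((a ^ 2 : ℝ) : ℂ) ^ ((1 : ℂ) / 2) = (a : ℂ) := by
    rw [show ((1 : ℂ) / 2) = ((1 / 2 : ℝ) : ℂ) by push_cast; ring,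
      ← Complex.ofReal_cpow (by positivity) (1 / 2), ← Real.rpow_natCast a 2,
      ← Real.rpow_mul ha.le]
    norm_num
  have h3 : Complex.exp (↑Real.pi * Complex.I * ((1 : ℂ) / 2)) = Complex.I := by
    rw [show (↑Real.pi * Complex.I * ((1 : ℂ) / 2)) = (↑Real.pi / 2 * Complex.I) by ring,
      ← Complex.log_I, Complex.exp_log Complex.I_ne_zero]
  rw [key, h2, h3, mul_comm]

/-- **Theorem 3.3, k = ω/Cp**: at the pressure-wave cutoff, `λ₂ = 0`,
`λ₁ = i·ω√(Cp² − Cs²)/(Cp·Cs)`, the matrix entries satisfy `b₁₂ = 0` and `b₂₂ = 1`, the two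
roots of `Q₀(z) = z² − (X₀² + 2Y₀)z + Y₀²` are exactly `1` and `b₁₁²`, and `|b₁₁| < 1`;
hence `max(|r₊|, |r₋|) = 1` and the non-overlapping method stagnates at this frequency. -/
theorem taylor_nonoverlapping_pressure_cutoff
    (ω Cs Cp k : ℝ)
    (hω : 0 < ω) (hCs : 0 < Cs) (hCsCp : Cs < Cp) (hCp2 : 2 * Cs ^ 2 < Cp ^ 2)
    (hk : k = ω / Cp)
    (hD : Dq ω Cs Cp k ≠ 0) :
    lam2 ω Cp k = 0 ∧
    lam1 ω Cs k = Complex.I * ((ω * Real.sqrt (Cp ^ 2 - Cs ^ 2) / (Cp * Cs) : ℝ) : ℂ) ∧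
    b12 ω Cs Cp k = 0 ∧
    b22 ω Cs Cp k = 1 ∧
    (∀ z : ℂ, Qd ω Cs Cp k 0 z = 0 ↔ z = 1 ∨ z = (b11 ω Cs Cp k) ^ 2) ∧
    ‖b11 ω Cs Cp k‖ < 1 := by
  have hCp : (0:ℝ) < Cp := hCs.trans hCsCp
  have hkpos : 0 < k := by rw [hk]; positivity
  set a : ℝ := ω * Real.sqrt (Cp ^ 2 - Cs ^ 2) / (Cp * Cs) with ha_def
  have hdiff : (0:ℝ) < Cp ^ 2 - Cs ^ 2 := by nlinarith
  have ha : 0 < a := by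
    have := Real.sqrt_pos.mpr hdiff
    positivity
  have ha2 : a ^ 2 = ω ^ 2 * (Cp ^ 2 - Cs ^ 2) / (Cp ^ 2 * Cs ^ 2) := by
    rw [ha_def, div_pow, mul_pow, mul_pow, Real.sq_sqrt hdiff.le]
  have h2 : lam2 ω Cp k = 0 := by
    have : k ^ 2 - ω ^ 2 / Cp ^ 2 = 0 := by
      rw [hk]; field_simp; ring
    rw [lam2, this, Complex.ofReal_zero, Complex.zero_cpow (by norm_num)]
  have h1 : lam1 ω Cs k = Complex.I * (a : ℂ) := by
    have hval : k ^ 2 - ω ^ 2 / Cs ^ 2 = -(a ^ 2) := by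
      rw [hk, ha2]; field_simp; ring
    rw [lam1, hval, neg_sq_cpow_half ha]
  have hZ2 : Z2 ω Cs Cp k = 0 := by rw [Z2, h2, mul_zero]
  have hb12 : b12 ω Cs Cp k = 0 := by rw [b12, h2]; simp
  have hb22 : b22 ω Cs Cp k = 1 := by
    have hnum : -Z1 ω Cs Cp k - Z2 ω Cs Cp k +
        Complex.I * (ω : ℂ) ^ 3 * (lam1 ω Cs k - lam2 ω Cp k * (Cp : ℂ) / (Cs : ℂ)) =
        Dq ω Cs Cp k := by
      rw [Dq, hZ2, h2]; ring
    rw [b22, hnum, div_self hD]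
  set z1 : ℝ := Cs ^ 3 * (k ^ 2 - a ^ 2) ^ 2 + ω ^ 2 * Cp * k ^ 2 with hz1_def
  set w : ℝ := ω ^ 3 * a with hw_def
  have hZ1 : Z1 ω Cs Cp k = ((z1 : ℝ) : ℂ) := by
    have hIa : (Complex.I * (a : ℂ)) ^ 2 = -((a : ℂ) ^ 2) := by
      rw [mul_pow, Complex.I_sq]; ring
    rw [Z1, h1, hIa, hz1_def]; push_cast; ring
  have hDq : Dq ω Cs Cp k = ((-z1 - w : ℝ) : ℂ) := by
    rw [Dq, hZ1, hZ2, h1, h2, hw_def]; push_cast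
    linear_combination ((ω:ℂ)^3 * (a:ℂ)) * Complex.I_sq
  have hb11 : b11 ω Cs Cp k = (((-z1 + w) / (-z1 - w) : ℝ) : ℂ) := by
    have hnum : -Z1 ω Cs Cp k - Z2 ω Cs Cp k -
        Complex.I * (ω : ℂ) ^ 3 * (lam1 ω Cs k - lam2 ω Cp k * (Cp : ℂ) / (Cs : ℂ)) =
        ((-z1 + w : ℝ) : ℂ) := by
      rw [hZ1, hZ2, h1, h2, hw_def]; push_cast
      linear_combination (-(ω:ℂ)^3 * (a:ℂ)) * Complex.I_sq
    rw [b11, hnum, hDq, ← Complex.ofReal_div]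
  have hz1pos : 0 < z1 := by
    have h1' : 0 < ω ^ 2 * Cp * k ^ 2 := by positivity
    have h2' : 0 ≤ Cs ^ 3 * (k ^ 2 - a ^ 2) ^ 2 := by positivity
    rw [hz1_def]; linarith
  have hwpos : 0 < w := by rw [hw_def]; positivity
  have habs : ‖b11 ω Cs Cp k‖ < 1 := by
    rw [hb11, Complex.norm_real, Real.norm_eq_abs, abs_div]
    rw [div_lt_one (by rw [abs_of_neg (by linarith : -z1 - w < 0)]; linarith)]
    rw [abs_of_neg (by linarith : -z1 - w < 0)]
    rw [abs_lt]; constructor <;> [linarith; linarith]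
  have hX : Xd ω Cs Cp k 0 = b11 ω Cs Cp k - 1 := by
    simp [Xd, hb22]
  have hY : Yd ω Cs Cp k 0 = b11 ω Cs Cp k := by
    simp [Yd, hb22, hb12]
  refine ⟨h2, h1, hb12, hb22, ?_, habs⟩
  intro z
  have hfac : Qd ω Cs Cp k 0 z = (z - 1) * (z - (b11 ω Cs Cp k) ^ 2) := by
    rw [Qd, hX, hY]; ring
  rw [hfac, mul_eq_zero, sub_eq_zero, sub_eq_zero]


end
end

section
/- Strict positivity of (Z₁+Z₂)² − λ₁λ₂K² in the high-frequency regime (claim (remark1) in the proof of Theorem 3.4): for every Fourier frequency k > ω/Cs, with λ₁ = √(k² − ω²/Cs²) > 0 and λ₂ = √(k² − ω²/Cp²) > 0 real, one has Z₁ + Z₂ > 0 and (Z₁ + Z₂)² − λ₁λ₂K² > 0, i.e. Z₁ + Z₂ > √(λ₁λ₂)·K. -/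
/-- Strict positivity of `(Z₁+Z₂)² − λ₁λ₂K²` in the high-frequency regime (claim (remark1)
in the proof of Theorem 3.4): for `k > ω/Cs`, with `λ₁ = √(k² − ω²/Cs²) > 0` and
`λ₂ = √(k² − ω²/Cp²) > 0`, one has `Z₁ + Z₂ > 0` and `(Z₁ + Z₂)² − λ₁λ₂K² > 0`, i.e.
`Z₁ + Z₂ > √(λ₁λ₂)·K`. -/
theorem remark1_positivity
    (ω Cs Cp k : ℝ)
    (hω : 0 < ω) (hCs : 0 < Cs) (hCsCp : Cs < Cp) (hCp2 : 2 * Cs ^ 2 < Cp ^ 2)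
    (hk : ω / Cs < k) :
    0 < Real.sqrt (k ^ 2 - ω ^ 2 / Cs ^ 2) ∧
    0 < Real.sqrt (k ^ 2 - ω ^ 2 / Cp ^ 2) ∧
    0 < (Cs ^ 3 * (k ^ 2 + Real.sqrt (k ^ 2 - ω ^ 2 / Cs ^ 2) ^ 2) ^ 2 + ω ^ 2 * Cp * k ^ 2)
        + (4 * Cs ^ 3 * k ^ 2 + Cp * ω ^ 2) * Real.sqrt (k ^ 2 - ω ^ 2 / Cs ^ 2)
            * Real.sqrt (k ^ 2 - ω ^ 2 / Cp ^ 2) ∧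
    0 < ((Cs ^ 3 * (k ^ 2 + Real.sqrt (k ^ 2 - ω ^ 2 / Cs ^ 2) ^ 2) ^ 2 + ω ^ 2 * Cp * k ^ 2)
          + (4 * Cs ^ 3 * k ^ 2 + Cp * ω ^ 2) * Real.sqrt (k ^ 2 - ω ^ 2 / Cs ^ 2)
              * Real.sqrt (k ^ 2 - ω ^ 2 / Cp ^ 2)) ^ 2
        - Real.sqrt (k ^ 2 - ω ^ 2 / Cs ^ 2) * Real.sqrt (k ^ 2 - ω ^ 2 / Cp ^ 2)
            * (2 * k * (Cp * ω ^ 2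
                + 2 * Cs ^ 3 * (k ^ 2 + Real.sqrt (k ^ 2 - ω ^ 2 / Cs ^ 2) ^ 2))) ^ 2 ∧
    Real.sqrt (Real.sqrt (k ^ 2 - ω ^ 2 / Cs ^ 2) * Real.sqrt (k ^ 2 - ω ^ 2 / Cp ^ 2))
          * (2 * k * (Cp * ω ^ 2
              + 2 * Cs ^ 3 * (k ^ 2 + Real.sqrt (k ^ 2 - ω ^ 2 / Cs ^ 2) ^ 2)))
        < (Cs ^ 3 * (k ^ 2 + Real.sqrt (k ^ 2 - ω ^ 2 / Cs ^ 2) ^ 2) ^ 2 + ω ^ 2 * Cp * k ^ 2)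
          + (4 * Cs ^ 3 * k ^ 2 + Cp * ω ^ 2) * Real.sqrt (k ^ 2 - ω ^ 2 / Cs ^ 2)
              * Real.sqrt (k ^ 2 - ω ^ 2 / Cp ^ 2) := by
  have hCp : 0 < Cp := hCs.trans hCsCp
  have hk0 : 0 < k := (div_pos hω hCs).trans hk
  have ha : 0 < k ^ 2 - ω ^ 2 / Cs ^ 2 := by
    have h1 : (ω / Cs) ^ 2 < k ^ 2 :=
      pow_lt_pow_left₀ hk (le_of_lt (div_pos hω hCs)) two_ne_zero
    rw [div_pow] at h1
    linarith
  have hb : 0 < k ^ 2 - ω ^ 2 / Cp ^ 2 := by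
    have h2 : ω ^ 2 / Cp ^ 2 < ω ^ 2 / Cs ^ 2 :=
      div_lt_div_of_pos_left (by positivity) (by positivity) (by nlinarith)
    linarith
  set s := Real.sqrt (k ^ 2 - ω ^ 2 / Cs ^ 2) with hs_def
  set t := Real.sqrt (k ^ 2 - ω ^ 2 / Cp ^ 2) with ht_def
  have hs : 0 < s := Real.sqrt_pos.mpr ha
  have ht : 0 < t := Real.sqrt_pos.mpr hb
  have hs2 : s ^ 2 = k ^ 2 - ω ^ 2 / Cs ^ 2 := Real.sq_sqrt ha.le
  have ht2 : t ^ 2 = k ^ 2 - ω ^ 2 / Cp ^ 2 := Real.sq_sqrt hb.le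
  set p := Real.sqrt (s * t) with hp_def
  have hp0 : 0 ≤ p := Real.sqrt_nonneg _
  have hp2 : p ^ 2 = s * t := Real.sq_sqrt (by positivity)
  have hsk : s < k := by nlinarith [div_pos (pow_pos hω 2) (pow_pos hCs 2)]
  have htk : t < k := by nlinarith [div_pos (pow_pos hω 2) (pow_pos hCp 2)]
  have hpk : p < k := by nlinarith
  have hkp : 0 < (k - p) ^ 2 := pow_pos (by linarith) 2
  set K := 2 * k * (Cp * ω ^ 2 + 2 * Cs ^ 3 * (k ^ 2 + s ^ 2)) with hK_def
  have hK : 0 < K := by positivity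
  set E := (Cs ^ 3 * (k ^ 2 + s ^ 2) ^ 2 + ω ^ 2 * Cp * k ^ 2)
      + (4 * Cs ^ 3 * k ^ 2 + Cp * ω ^ 2) * s * t with hE_def
  have hid : E - p * K
      = ω ^ 2 * Cp * (k - p) ^ 2 + Cs ^ 3 * (k ^ 2 + s ^ 2 - 2 * k * p) ^ 2 := by
    rw [hE_def, hK_def]
    linear_combination (-(4 * Cs ^ 3 * k ^ 2) - Cp * ω ^ 2) * hp2
  have key : 0 < E - p * K := by
    rw [hid]
    have h1 : 0 < ω ^ 2 * Cp * (k - p) ^ 2 := by positivity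
    have h2 : 0 ≤ Cs ^ 3 * (k ^ 2 + s ^ 2 - 2 * k * p) ^ 2 := by positivity
    linarith
  have hpK : 0 ≤ p * K := mul_nonneg hp0 hK.le
  have hE : 0 < E := by linarith
  refine ⟨hs, ht, hE, ?_, by linarith⟩
  have h4 : 0 < E + p * K := by linarith
  have hfac : E ^ 2 - s * t * K ^ 2 = (E - p * K) * (E + p * K) := by
    linear_combination K ^ 2 * hp2
  rw [hfac]
  exact mul_pos key h4
end

section
/- Stagnation of Taylor transmission conditions without overlap at the shear-wave cutoff (Theorem 3.3, k = ω/Cs): at k = ω/Cs one has λ₁ = 0 and λ₂ = ω√(Cp² − Cs²)/(Cp·Cs) > 0, the matrix entries satisfy b₁₁ = 1 and b₂₁ = 0, the two roots of the quadratic Q₀(z) = z² − (X₀² + 2Y₀)z + Y₀² are exactly 1 and b₂₂², and |b₂₂| = 1; hence both roots have modulus exactly 1 and the non-overlapping method stagnates at this frequency. -/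
noncomputable section

open Complex

/-- **Theorem 3.3, k = ω/Cs**: at the shear-wave cutoff, `λ₁ = 0` and
`λ₂ = ω√(Cp² − Cs²)/(Cp·Cs) > 0`, the matrix entries satisfy `b₁₁ = 1` and `b₂₁ = 0`, the
two roots of `Q₀(z) = z² − (X₀² + 2Y₀)z + Y₀²` are exactly `1` and `b₂₂²`, and `|b₂₂| = 1`;
hence both roots have modulus exactly `1` and the non-overlapping method stagnates. -/
theorem taylor_nonoverlapping_shear_cutoff_stagnation
    (ω Cs Cp k : ℝ)
    (hω : 0 < ω) (hCs : 0 < Cs) (hCsCp : Cs < Cp) (hCp2 : 2 * Cs ^ 2 < Cp ^ 2)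
    (hk : k = ω / Cs)
    (hD : Dq ω Cs Cp k ≠ 0) :
    lam1 ω Cs k = 0 ∧
    0 < ω * Real.sqrt (Cp ^ 2 - Cs ^ 2) / (Cp * Cs) ∧
    lam2 ω Cp k = ((ω * Real.sqrt (Cp ^ 2 - Cs ^ 2) / (Cp * Cs) : ℝ) : ℂ) ∧
    b11 ω Cs Cp k = 1 ∧
    b21 ω Cs Cp k = 0 ∧
    (∀ z : ℂ, Qd ω Cs Cp k 0 z = 0 ↔ z = 1 ∨ z = (b22 ω Cs Cp k) ^ 2) ∧
    ‖b22 ω Cs Cp k‖ = 1 := by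
  have hCp : 0 < Cp := hCs.trans hCsCp
  have hCsne : (Cs : ℝ) ≠ 0 := ne_of_gt hCs
  have hCpne : (Cp : ℝ) ≠ 0 := ne_of_gt hCp
  have hdiff : 0 < Cp ^ 2 - Cs ^ 2 := by nlinarith
  set L : ℝ := ω * Real.sqrt (Cp ^ 2 - Cs ^ 2) / (Cp * Cs) with hLdef
  have hsqrt : Real.sqrt (Cp ^ 2 - Cs ^ 2) > 0 := Real.sqrt_pos.mpr hdiff
  have hLpos : 0 < L := div_pos (mul_pos hω hsqrt) (mul_pos hCp hCs)
  have hx : k ^ 2 - ω ^ 2 / Cs ^ 2 = 0 := by rw [hk]; field_simp; ring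
  have hl1 : lam1 ω Cs k = 0 := by
    rw [lam1, hx]
    norm_num
  have hsq : Real.sqrt (Cp ^ 2 - Cs ^ 2) ^ 2 = Cp ^ 2 - Cs ^ 2 := Real.sq_sqrt hdiff.le
  have hy : k ^ 2 - ω ^ 2 / Cp ^ 2 = L ^ 2 := by
    have hL2 : L ^ 2 = ω ^ 2 * (Cp ^ 2 - Cs ^ 2) / (Cp ^ 2 * Cs ^ 2) := by
      rw [hLdef, div_pow, mul_pow, hsq, mul_pow]
    rw [hk, hL2]
    field_simp
  have hl2 : lam2 ω Cp k = ((L : ℝ) : ℂ) := by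
    rw [lam2, hy]
    have h12 : ((1 : ℂ) / 2) = (((1 : ℝ) / 2 : ℝ) : ℂ) := by push_cast; ring
    rw [h12, ← Complex.ofReal_cpow (by positivity : (0:ℝ) ≤ L ^ 2)]
    have : (L ^ 2 : ℝ) ^ ((1 : ℝ) / 2) = L := by
      rw [← Real.sqrt_eq_rpow, Real.sqrt_sq hLpos.le]
    rw [this]
  have hZ2 : Z2 ω Cs Cp k = 0 := by rw [Z2, hl1]; ring
  have hb11 : b11 ω Cs Cp k = 1 := by
    rw [b11, div_eq_one_iff_eq hD, Dq, hZ2, hl1]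
    ring
  have hb21 : b21 ω Cs Cp k = 0 := by
    rw [b21, hl1]
    simp
  have hconj : -Z1 ω Cs Cp k - Z2 ω Cs Cp k +
      Complex.I * (ω : ℂ) ^ 3 * (lam1 ω Cs k - lam2 ω Cp k * (Cp : ℂ) / (Cs : ℂ)) =
      starRingEnd ℂ (Dq ω Cs Cp k) := by
    simp only [Dq, Z1, Z2, hl1, hl2, map_add, map_neg, map_mul, map_sub, map_pow,
      map_div₀, map_zero, Complex.conj_ofReal, Complex.conj_I, map_ofNat]
    ring
  have hb22 : b22 ω Cs Cp k = starRingEnd ℂ (Dq ω Cs Cp k) / Dq ω Cs Cp k := by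
    rw [b22, hconj]
  have habs : ‖b22 ω Cs Cp k‖ = 1 := by
    rw [hb22, norm_div, Complex.norm_conj, div_self (norm_ne_zero_iff.mpr hD)]
  have hX : Xd ω Cs Cp k 0 = 1 - b22 ω Cs Cp k := by
    simp [Xd, hb11]
  have hY : Yd ω Cs Cp k 0 = b22 ω Cs Cp k := by
    simp [Yd, hb11, hb21]
  refine ⟨hl1, hLpos, hl2, hb11, hb21, ?_, habs⟩
  intro z
  have hfact : Qd ω Cs Cp k 0 z = (z - 1) * (z - (b22 ω Cs Cp k) ^ 2) := by
    rw [Qd, hX, hY]; ring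
  rw [hfact, mul_eq_zero, sub_eq_zero, sub_eq_zero]

end
end

section
/- High-frequency stagnation of Taylor transmission conditions without overlap (Theorem 3.3, last case): for every Fourier frequency k > ω/Cs (so λ₁ = √(k² − ω²/Cs²) > 0 and λ₂ = √(k² − ω²/Cp²) > 0 are real), both roots of the quadratic Q₀(z) = z² − (X₀² + 2Y₀)z + Y₀² have modulus exactly equal to 1; hence the non-overlapping Schwarz method with zeroth-order Taylor transmission conditions stagnates on all frequencies k ≥ ω/Cs. -/
noncomputable section

open Complex

/-- Auxiliary: any root of `(e+id)w² + 2icw − (e−id) = 0` with `c² < e²+d²` has modulus 1. -/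
lemma unit_root_aux (e d c : ℝ) (w : ℂ) (hlt : c ^ 2 < e ^ 2 + d ^ 2)
    (h : ((e : ℂ) + Complex.I * (d : ℂ)) * w ^ 2 + 2 * Complex.I * (c : ℂ) * w -
      ((e : ℂ) - Complex.I * (d : ℂ)) = 0) : ‖w‖ = 1 := by
  have hconj := congrArg (starRingEnd ℂ) h
  simp only [map_sub, map_add, map_mul, map_pow, map_ofNat, Complex.conj_ofReal,
    Complex.conj_I, map_zero] at hconj
  -- hconj : (e - I d) * (conj w)^2 + 2 * (-I) * c * conj w - (e + I d) = 0
  set t : ℝ := Complex.normSq w with ht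
  have ht0 : 0 ≤ t := Complex.normSq_nonneg w
  have htc : w * (starRingEnd ℂ) w = (t : ℂ) := Complex.mul_conj w
  have key : (((e : ℂ) - Complex.I * d) * (1 + (t : ℂ)) - 2 * Complex.I * c * w) *
      (1 - (t : ℂ)) = 0 := by
    rw [← htc]
    linear_combination (-1 : ℂ) * h - w ^ 2 * hconj
  by_cases ht1 : t = 1
  · rw [Complex.norm_def, ← ht, ht1, Real.sqrt_one]
  · exfalso
    have h1t : (1 : ℂ) - (t : ℂ) ≠ 0 := by
      intro hc
      apply ht1
      have : ((1 - t : ℝ) : ℂ) = 0 := by push_cast; linear_combination hc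
      have := Complex.ofReal_eq_zero.mp this
      linarith
    have heq : ((e : ℂ) - Complex.I * d) * (1 + (t : ℂ)) = 2 * Complex.I * c * w :=
      sub_eq_zero.mp ((mul_eq_zero.mp key).resolve_right h1t)
    have hns := congrArg Complex.normSq heq
    have h1 : Complex.normSq ((e : ℂ) - Complex.I * d) = e ^ 2 + d ^ 2 := by
      simp [Complex.normSq_apply, Complex.sub_re, Complex.sub_im, Complex.mul_re,
        Complex.mul_im, Complex.I_re, Complex.I_im, Complex.ofReal_re, Complex.ofReal_im]
      ring
    have h2 : Complex.normSq (1 + (t : ℂ)) = (1 + t) ^ 2 := by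
      have : (1 : ℂ) + (t : ℂ) = ((1 + t : ℝ) : ℂ) := by push_cast; ring
      rw [this, Complex.normSq_ofReal]; ring
    have h3 : Complex.normSq (2 * Complex.I * (c : ℂ) * w) = 4 * c ^ 2 * t := by
      rw [show (2 : ℂ) * Complex.I * (c : ℂ) * w = ((2 * c : ℝ) : ℂ) * (Complex.I * w) by
        push_cast; ring, Complex.normSq_mul, Complex.normSq_mul, Complex.normSq_ofReal,
        Complex.normSq_I, ← ht]
      ring
    rw [Complex.normSq_mul, h1, h2, h3] at hns
    nlinarith [sq_nonneg (1 - t), sq_nonneg (1 + t), mul_nonneg ht0 (sub_pos.mpr hlt).le]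

/-- **Theorem 3.3, last case**: for every `k > ω/Cs`, both roots of
`Q₀(z) = z² − (X₀² + 2Y₀)z + Y₀²` have modulus exactly `1`; the non-overlapping Schwarz
method with zeroth-order Taylor transmission conditions stagnates on these frequencies. -/
theorem taylor_nonoverlapping_high_frequency_stagnation
    (ω Cs Cp k : ℝ)
    (hω : 0 < ω) (hCs : 0 < Cs) (hCsCp : Cs < Cp) (hCp2 : 2 * Cs ^ 2 < Cp ^ 2)
    (hk : ω / Cs < k)
    (hD : Dq ω Cs Cp k ≠ 0) :
    ∀ z : ℂ, Qd ω Cs Cp k 0 z = 0 → ‖z‖ = 1 := by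
  have hCp : 0 < Cp := hCs.trans hCsCp
  have hq : 0 < ω / Cs := div_pos hω hCs
  have hk0 : 0 < k := hq.trans hk
  have hx1 : 0 < k ^ 2 - ω ^ 2 / Cs ^ 2 := by
    have h1 : (ω / Cs) ^ 2 < k ^ 2 := by nlinarith
    have h2 : (ω / Cs) ^ 2 = ω ^ 2 / Cs ^ 2 := by rw [div_pow]
    linarith
  have hx2 : 0 < k ^ 2 - ω ^ 2 / Cp ^ 2 := by
    have h1 : ω ^ 2 / Cp ^ 2 < ω ^ 2 / Cs ^ 2 :=
      div_lt_div_of_pos_left (by positivity) (by positivity) (by nlinarith)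
    linarith
  set l1 : ℝ := Real.sqrt (k ^ 2 - ω ^ 2 / Cs ^ 2) with hl1def
  set l2 : ℝ := Real.sqrt (k ^ 2 - ω ^ 2 / Cp ^ 2) with hl2def
  have hl1pos : 0 < l1 := Real.sqrt_pos.mpr hx1
  have hl2pos : 0 < l2 := Real.sqrt_pos.mpr hx2
  have hl1sq : l1 ^ 2 = k ^ 2 - ω ^ 2 / Cs ^ 2 := Real.sq_sqrt hx1.le
  have hl2sq : l2 ^ 2 = k ^ 2 - ω ^ 2 / Cp ^ 2 := Real.sq_sqrt hx2.le
  have half : ((1 : ℂ) / 2) = (((1 : ℝ) / 2 : ℝ) : ℂ) := by norm_num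
  have hl1 : lam1 ω Cs k = (l1 : ℂ) := by
    rw [lam1, half, ← Complex.ofReal_cpow hx1.le, hl1def, Real.sqrt_eq_rpow]
  have hl2 : lam2 ω Cp k = (l2 : ℂ) := by
    rw [lam2, half, ← Complex.ofReal_cpow hx2.le, hl2def, Real.sqrt_eq_rpow]
  -- real abbreviations
  set z1r : ℝ := Cs ^ 3 * (k ^ 2 + l1 ^ 2) ^ 2 + ω ^ 2 * Cp * k ^ 2 with hz1r
  set z2r : ℝ := (4 * Cs ^ 3 * k ^ 2 + Cp * ω ^ 2) * l1 * l2 with hz2r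
  set kqr : ℝ := 2 * k * (Cp * ω ^ 2 + 2 * Cs ^ 3 * (k ^ 2 + l1 ^ 2)) with hkqr
  set ar : ℝ := Cs * (z1r + z2r) with har
  set cr : ℝ := ω ^ 3 * (Cs * l1 - Cp * l2) with hcr
  set dr : ℝ := ω ^ 3 * (Cs * l1 + Cp * l2) with hdr
  set er : ℝ := Cs * (z2r - z1r) with her
  have hCsne : (Cs : ℂ) ≠ 0 := Complex.ofReal_ne_zero.mpr hCs.ne'
  have hE0 : Dq ω Cs Cp k * (Cs : ℂ) ≠ 0 := mul_ne_zero hD hCsne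
  have hE : Dq ω Cs Cp k * (Cs : ℂ) = (er : ℂ) + Complex.I * (dr : ℂ) := by
    rw [Dq, Z1, Z2, hl1, hl2, her, hz1r, hz2r, hdr]
    push_cast
    field_simp
    ring
  have hb11E : b11 ω Cs Cp k * (Dq ω Cs Cp k * (Cs : ℂ)) = -(ar : ℂ) - Complex.I * (cr : ℂ) := by
    rw [b11, div_mul_eq_mul_div, mul_comm (Dq ω Cs Cp k) ((Cs : ℂ)), ← mul_assoc,
      mul_div_assoc, div_self hD, mul_one, Z1, Z2, hl1, hl2, har, hz1r, hz2r, hcr]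
    push_cast
    field_simp
    ring
  have hb22E : b22 ω Cs Cp k * (Dq ω Cs Cp k * (Cs : ℂ)) = -(ar : ℂ) + Complex.I * (cr : ℂ) := by
    rw [b22, div_mul_eq_mul_div, mul_comm (Dq ω Cs Cp k) ((Cs : ℂ)), ← mul_assoc,
      mul_div_assoc, div_self hD, mul_one, Z1, Z2, hl1, hl2, har, hz1r, hz2r, hcr]
    push_cast
    field_simp
    ring
  have hb12E : b12 ω Cs Cp k * (Dq ω Cs Cp k * (Cs : ℂ)) =
      Complex.I * (l2 : ℂ) * (Cs : ℂ) * (kqr : ℂ) := by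
    rw [b12, div_mul_eq_mul_div, mul_comm (Dq ω Cs Cp k) ((Cs : ℂ)), ← mul_assoc,
      mul_div_assoc, div_self hD, mul_one, Kq, hl1, hl2, hkqr]
    push_cast
    ring
  have hb21E : b21 ω Cs Cp k * (Dq ω Cs Cp k * (Cs : ℂ)) =
      -(Complex.I * (l1 : ℂ) * (Cs : ℂ) * (kqr : ℂ)) := by
    rw [b21, div_mul_eq_mul_div, mul_comm (Dq ω Cs Cp k) ((Cs : ℂ)), ← mul_assoc,
      mul_div_assoc, div_self hD, mul_one, Kq, hl1, hkqr]
    push_cast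
    ring
  -- the fundamental real identity
  have hkey : ar ^ 2 + cr ^ 2 - Cs ^ 2 * l1 * l2 * kqr ^ 2 = er ^ 2 + dr ^ 2 := by
    have hl1sq' : Cs ^ 2 * l1 ^ 2 = Cs ^ 2 * k ^ 2 - ω ^ 2 := by
      rw [hl1sq]; field_simp
    rw [har, hcr, her, hdr, hz1r, hz2r, hkqr]
    linear_combination (l1 * l2 * 4 * Cp * ω ^ 2 * Cs *
      (Cs ^ 2 * l1 ^ 2 - Cs ^ 2 * k ^ 2 - ω ^ 2)) * hl1sq'
  -- X and Y at δ = 0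
  have hXzero : Xd ω Cs Cp k 0 = b11 ω Cs Cp k - b22 ω Cs Cp k := by
    rw [Xd]; push_cast; simp
  have hYzero : Yd ω Cs Cp k 0 =
      b11 ω Cs Cp k * b22 ω Cs Cp k - b12 ω Cs Cp k * b21 ω Cs Cp k := by
    rw [Yd]; push_cast; simp
  have hXE : Xd ω Cs Cp k 0 * (Dq ω Cs Cp k * (Cs : ℂ)) = -(2 * Complex.I * (cr : ℂ)) := by
    rw [hXzero, sub_mul, hb11E, hb22E]; ring
  have hYE2 : Yd ω Cs Cp k 0 * (Dq ω Cs Cp k * (Cs : ℂ)) ^ 2 =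
      ((er ^ 2 + dr ^ 2 : ℝ) : ℂ) := by
    have expand : Yd ω Cs Cp k 0 * (Dq ω Cs Cp k * (Cs : ℂ)) ^ 2 =
        (b11 ω Cs Cp k * (Dq ω Cs Cp k * (Cs : ℂ))) *
          (b22 ω Cs Cp k * (Dq ω Cs Cp k * (Cs : ℂ))) -
        (b12 ω Cs Cp k * (Dq ω Cs Cp k * (Cs : ℂ))) *
          (b21 ω Cs Cp k * (Dq ω Cs Cp k * (Cs : ℂ))) := by
      rw [hYzero]; ring
    rw [expand, hb11E, hb22E, hb12E, hb21E, ← hkey]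
    push_cast
    linear_combination ((l1 : ℂ) * (l2 : ℂ) * (Cs : ℂ) ^ 2 * (kqr : ℂ) ^ 2 - (cr : ℂ) ^ 2) *
      Complex.I_sq
  have hYE : Yd ω Cs Cp k 0 * (Dq ω Cs Cp k * (Cs : ℂ)) = (er : ℂ) - Complex.I * (dr : ℂ) := by
    have h2 : (Yd ω Cs Cp k 0 * (Dq ω Cs Cp k * (Cs : ℂ))) * (Dq ω Cs Cp k * (Cs : ℂ)) =
        ((er : ℂ) - Complex.I * (dr : ℂ)) * (Dq ω Cs Cp k * (Cs : ℂ)) := by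
      rw [mul_assoc, ← sq, hYE2]
      rw [mul_comm ((er : ℂ) - Complex.I * (dr : ℂ)) _, hE]
      push_cast
      linear_combination (dr : ℂ) ^ 2 * Complex.I_sq
    exact mul_right_cancel₀ hE0 h2
  have hlt : cr ^ 2 < er ^ 2 + dr ^ 2 := by
    have hd2c2 : dr ^ 2 - cr ^ 2 = 4 * ω ^ 6 * Cs * Cp * l1 * l2 := by
      rw [hcr, hdr]; ring
    nlinarith [sq_nonneg er, mul_pos (mul_pos (mul_pos (mul_pos
      (mul_pos (by positivity : (0:ℝ) < 4) (by positivity : (0:ℝ) < ω ^ 6)) hCs) hCp)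
      hl1pos) hl2pos]
  -- core: roots of μ² − Xμ − Y = 0 have modulus 1
  have core : ∀ w : ℂ, w ^ 2 - Xd ω Cs Cp k 0 * w - Yd ω Cs Cp k 0 = 0 →
      ‖w‖ = 1 := by
    intro w hw
    apply unit_root_aux er dr cr w hlt
    rw [← hE]
    linear_combination (Dq ω Cs Cp k * (Cs : ℂ)) * hw + w * hXE + hYE
  intro z hz
  rw [Qd] at hz
  obtain ⟨w, hw⟩ := IsAlgClosed.exists_pow_nat_eq z (n := 2) (by norm_num)
  have hfact : (w ^ 2 - Xd ω Cs Cp k 0 * w - Yd ω Cs Cp k 0) *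
      (w ^ 2 + Xd ω Cs Cp k 0 * w - Yd ω Cs Cp k 0) = 0 := by
    rw [← hw] at hz
    linear_combination hz
  have habsw : ‖w‖ = 1 := by
    rcases mul_eq_zero.mp hfact with h | h
    · exact core w h
    · have : (-w) ^ 2 - Xd ω Cs Cp k 0 * (-w) - Yd ω Cs Cp k 0 = 0 := by
        linear_combination h
      have h2 := core (-w) this
      rwa [norm_neg] at h2
  rw [← hw, norm_pow, habsw, one_pow]

end
end

section
/- Behavior of overlapping Taylor transmission conditions at the shear-wave cutoff (Theorem 3.4, k = ω/Cs): at k = ω/Cs one has λ₁ = 0 and λ₂ = ω√(Cp² − Cs²)/(Cp·Cs) > 0, the matrix entries satisfy b₁₁ = 1 and b₂₁ = 0 with |b₂₂| = 1, and for every overlap δ > 0 the two roots of the quadratic Q_δ(z) = z² − (X_δ² + 2Y_δ)z + Y_δ² are exactly 1 and e^{−2λ₂δ}·b₂₂²; in particular one root has modulus 1 and the other has modulus e^{−2λ₂δ} < 1, so the method stagnates at this frequency for any overlap. -/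
noncomputable section

open Complex

/-- **Theorem 3.4, k = ω/Cs**: at the shear-wave cutoff, `λ₁ = 0` and
`λ₂ = ω√(Cp² − Cs²)/(Cp·Cs) > 0`, the entries satisfy `b₁₁ = 1`, `b₂₁ = 0` and `|b₂₂| = 1`,
and for every overlap `δ > 0` the two roots of `Q_δ(z) = z² − (X_δ² + 2Y_δ)z + Y_δ²` are
exactly `1` and `e^{−2λ₂δ}·b₂₂²`; one root has modulus `1` and the other has modulus
`e^{−2λ₂δ} < 1`, so the method stagnates at this frequency for any overlap. -/
theorem taylor_overlapping_shear_cutoff_stagnation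
    (ω Cs Cp k δ : ℝ)
    (hω : 0 < ω) (hCs : 0 < Cs) (hCsCp : Cs < Cp) (hCp2 : 2 * Cs ^ 2 < Cp ^ 2)
    (hk : k = ω / Cs) (hδ : 0 < δ)
    (hD : Dq ω Cs Cp k ≠ 0) :
    lam1 ω Cs k = 0 ∧
    0 < ω * Real.sqrt (Cp ^ 2 - Cs ^ 2) / (Cp * Cs) ∧
    lam2 ω Cp k = ((ω * Real.sqrt (Cp ^ 2 - Cs ^ 2) / (Cp * Cs) : ℝ) : ℂ) ∧
    b11 ω Cs Cp k = 1 ∧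
    b21 ω Cs Cp k = 0 ∧
    ‖b22 ω Cs Cp k‖ = 1 ∧
    (∀ z : ℂ, Qd ω Cs Cp k δ z = 0 ↔
      z = 1 ∨
      z = Complex.exp (-2 * ((ω * Real.sqrt (Cp ^ 2 - Cs ^ 2) / (Cp * Cs) : ℝ) : ℂ) * (δ : ℂ))
            * (b22 ω Cs Cp k) ^ 2) ∧
    ‖Complex.exp (-2 * ((ω * Real.sqrt (Cp ^ 2 - Cs ^ 2) / (Cp * Cs) : ℝ) : ℂ)
          * (δ : ℂ)) * (b22 ω Cs Cp k) ^ 2‖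
      = Real.exp (-2 * (ω * Real.sqrt (Cp ^ 2 - Cs ^ 2) / (Cp * Cs)) * δ) ∧
    Real.exp (-2 * (ω * Real.sqrt (Cp ^ 2 - Cs ^ 2) / (Cp * Cs)) * δ) < 1 := by
  have hCp : 0 < Cp := hCs.trans hCsCp
  have hcc : 0 < Cp ^ 2 - Cs ^ 2 := by nlinarith
  set L2 : ℝ := ω * Real.sqrt (Cp ^ 2 - Cs ^ 2) / (Cp * Cs) with hL2def
  have hsq : Real.sqrt (Cp ^ 2 - Cs ^ 2) ^ 2 = Cp ^ 2 - Cs ^ 2 := Real.sq_sqrt hcc.le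
  have hsqpos : 0 < Real.sqrt (Cp ^ 2 - Cs ^ 2) := Real.sqrt_pos.mpr hcc
  have hL2pos : 0 < L2 := by
    apply div_pos (mul_pos hω hsqpos) (mul_pos hCp hCs)
  -- lam1 = 0
  have hlam1 : lam1 ω Cs k = 0 := by
    unfold lam1
    rw [hk]
    have h0 : (ω / Cs) ^ 2 - ω ^ 2 / Cs ^ 2 = 0 := by field_simp; ring
    rw [h0]
    simp only [Complex.ofReal_zero]
    exact Complex.zero_cpow (by norm_num)
  -- lam2 = L2
  have hlam2 : lam2 ω Cp k = ((L2 : ℝ) : ℂ) := by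
    unfold lam2
    rw [hk]
    have hr : (ω / Cs) ^ 2 - ω ^ 2 / Cp ^ 2 = L2 ^ 2 := by
      have hL2sq : L2 ^ 2 = ω ^ 2 * (Cp ^ 2 - Cs ^ 2) / (Cp ^ 2 * Cs ^ 2) := by
        rw [hL2def, div_pow, mul_pow, mul_pow, hsq]
      rw [hL2sq]
      field_simp
    rw [hr]
    have h12 : ((1 : ℂ) / 2) = (((1 : ℝ) / 2 : ℝ) : ℂ) := by norm_num
    rw [h12, ← Complex.ofReal_cpow (sq_nonneg L2)]
    rw [← Real.sqrt_eq_rpow, Real.sqrt_sq hL2pos.le]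
  -- Z2 = 0
  have hZ2 : Z2 ω Cs Cp k = 0 := by
    unfold Z2; rw [hlam1]; ring
  -- real constants
  set R : ℝ := Cs ^ 3 * k ^ 4 + ω ^ 2 * Cp * k ^ 2 with hRdef
  set S : ℝ := ω ^ 3 * L2 * Cp / Cs with hSdef
  have hZ1 : Z1 ω Cs Cp k = ((R : ℝ) : ℂ) := by
    unfold Z1; rw [hlam1, hRdef]; push_cast; ring
  have hDeq : Dq ω Cs Cp k = -((R : ℝ) : ℂ) + Complex.I * ((S : ℝ) : ℂ) := by
    unfold Dq
    rw [hZ1, hZ2, hlam1, hlam2, hSdef]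
    have hCs' : (Cs : ℂ) ≠ 0 := Complex.ofReal_ne_zero.mpr hCs.ne'
    push_cast
    field_simp
    ring
  -- b11 = 1
  have hb11 : b11 ω Cs Cp k = 1 := by
    unfold b11
    rw [hZ1, hZ2, hlam1, hlam2]
    have hnum : -((R : ℝ) : ℂ) - 0 - Complex.I * (ω : ℂ) ^ 3 *
        (0 - ((L2 : ℝ) : ℂ) * (Cp : ℂ) / (Cs : ℂ)) = Dq ω Cs Cp k := by
      rw [hDeq, hSdef]
      have hCs' : (Cs : ℂ) ≠ 0 := Complex.ofReal_ne_zero.mpr hCs.ne'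
      push_cast
      field_simp
      ring
    rw [hnum]
    exact div_self hD
  -- b21 = 0
  have hb21 : b21 ω Cs Cp k = 0 := by
    unfold b21; rw [hlam1]; simp
  -- b22
  have hb22 : b22 ω Cs Cp k =
      (-((R : ℝ) : ℂ) - Complex.I * ((S : ℝ) : ℂ)) / Dq ω Cs Cp k := by
    unfold b22
    rw [hZ1, hZ2, hlam1, hlam2]
    congr 1
    have hCs' : (Cs : ℂ) ≠ 0 := Complex.ofReal_ne_zero.mpr hCs.ne'
    rw [hSdef]; push_cast; field_simp; ring
  have hconj : -((R : ℝ) : ℂ) - Complex.I * ((S : ℝ) : ℂ) =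
      (starRingEnd ℂ) (Dq ω Cs Cp k) := by
    rw [hDeq]
    simp [map_add, map_mul, Complex.conj_ofReal, Complex.conj_I]
    ring
  have hb22abs : ‖b22 ω Cs Cp k‖ = 1 := by
    rw [hb22, hconj, norm_div, Complex.norm_conj]
    exact div_self (norm_ne_zero_iff.mpr hD)
  -- the quadratic
  set E : ℂ := Complex.exp (-((L2 : ℝ) : ℂ) * (δ : ℂ)) with hEdef
  set B : ℂ := b22 ω Cs Cp k with hBdef
  have hX : Xd ω Cs Cp k δ = 1 - E * B := by
    unfold Xd
    rw [hlam1, hlam2, hb11, hEdef]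
    simp
    exact hBdef.symm
  have hY : Yd ω Cs Cp k δ = E * B := by
    unfold Yd
    rw [hlam1, hlam2, hb11, hb21, hEdef]
    simp
    exact hBdef.symm
  have hE2 : E ^ 2 = Complex.exp (-2 * ((L2 : ℝ) : ℂ) * (δ : ℂ)) := by
    rw [hEdef, sq, ← Complex.exp_add]
    ring_nf
  have hroots : ∀ z : ℂ, Qd ω Cs Cp k δ z = 0 ↔
      z = 1 ∨ z = Complex.exp (-2 * ((L2 : ℝ) : ℂ) * (δ : ℂ)) * B ^ 2 := by
    intro z
    have hfac : Qd ω Cs Cp k δ z =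
        (z - 1) * (z - Complex.exp (-2 * ((L2 : ℝ) : ℂ) * (δ : ℂ)) * B ^ 2) := by
      unfold Qd
      rw [hX, hY, ← hE2]
      ring
    rw [hfac, mul_eq_zero, sub_eq_zero, sub_eq_zero]
  -- modulus of the second root
  have habs2 : ‖Complex.exp (-2 * ((L2 : ℝ) : ℂ) * (δ : ℂ)) * B ^ 2‖
      = Real.exp (-2 * L2 * δ) := by
    have harg : (-2 * ((L2 : ℝ) : ℂ) * (δ : ℂ)) = (((-2 * L2 * δ : ℝ)) : ℂ) := by
      push_cast; ring
    rw [norm_mul, norm_pow, hBdef, hb22abs, harg, Complex.norm_exp, Complex.ofReal_re]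
    ring
  have hlt : Real.exp (-2 * L2 * δ) < 1 := by
    apply Real.exp_lt_one_iff.mpr
    nlinarith
  exact ⟨hlam1, hL2pos, hlam2, hb11, hb21, hb22abs, hroots, habs2, hlt⟩

end
end

section
/- Negativity of the divergence indicator just above the shear cutoff (key step in the proof of Theorem 3.4): define for k ≥ ω/Cs the real quantity g̃(k) = 2(Z₁ + Z₂) − K(λ₁ + λ₂), where λ₁ = √(k² − ω²/Cs²) ≥ 0 and λ₂ = √(k² − ω²/Cp²) > 0. Then g̃(ω/Cs) = (2ω⁴/(Cp·Cs²))·(Cp(Cp + Cs) − (Cp + 2Cs)√(Cp² − Cs²)) < 0 (the inequality Cp(Cp + Cs) < (Cp + 2Cs)√(Cp² − Cs²) holding because Cp² > 2Cs²), and consequently there exists ε > 0 such that g̃(k) < 0 for all k with ω/Cs ≤ k < ω/Cs + ε. -/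
/-- Negativity of the divergence indicator just above the shear cutoff (key step in the
proof of Theorem 3.4): define, for `k ≥ ω/Cs`,
`g̃(k) = 2(Z₁ + Z₂) − K(λ₁ + λ₂)` where `λ₁ = √(k² − ω²/Cs²) ≥ 0`,
`λ₂ = √(k² − ω²/Cp²) > 0`, `Z₁ = Cs³(k² + λ₁²)² + ω²Cp·k²`, `Z₂ = (4Cs³k² + Cpω²)λ₁λ₂` and
`K = 2k(Cpω² + 2Cs³(k² + λ₁²))`. Then
`g̃(ω/Cs) = (2ω⁴/(Cp·Cs²))·(Cp(Cp + Cs) − (Cp + 2Cs)√(Cp² − Cs²)) < 0` (the inequality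
`Cp(Cp + Cs) < (Cp + 2Cs)√(Cp² − Cs²)` holding because `Cp² > 2Cs²`), and consequently there
is `ε > 0` with `g̃(k) < 0` for all `ω/Cs ≤ k < ω/Cs + ε`. -/
theorem divergence_indicator_negative_above_shear_cutoff
    (ω Cs Cp : ℝ)
    (hω : 0 < ω) (hCs : 0 < Cs) (hCsCp : Cs < Cp) (hCp2 : 2 * Cs ^ 2 < Cp ^ 2) :
    let gt : ℝ → ℝ := fun k =>
      2 * ((Cs ^ 3 * (k ^ 2 + Real.sqrt (k ^ 2 - ω ^ 2 / Cs ^ 2) ^ 2) ^ 2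
            + ω ^ 2 * Cp * k ^ 2)
          + (4 * Cs ^ 3 * k ^ 2 + Cp * ω ^ 2) * Real.sqrt (k ^ 2 - ω ^ 2 / Cs ^ 2)
              * Real.sqrt (k ^ 2 - ω ^ 2 / Cp ^ 2))
        - 2 * k * (Cp * ω ^ 2 + 2 * Cs ^ 3 * (k ^ 2 + Real.sqrt (k ^ 2 - ω ^ 2 / Cs ^ 2) ^ 2))
            * (Real.sqrt (k ^ 2 - ω ^ 2 / Cs ^ 2) + Real.sqrt (k ^ 2 - ω ^ 2 / Cp ^ 2))
    gt (ω / Cs) = (2 * ω ^ 4 / (Cp * Cs ^ 2)) *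
        (Cp * (Cp + Cs) - (Cp + 2 * Cs) * Real.sqrt (Cp ^ 2 - Cs ^ 2)) ∧
    Cp * (Cp + Cs) < (Cp + 2 * Cs) * Real.sqrt (Cp ^ 2 - Cs ^ 2) ∧
    gt (ω / Cs) < 0 ∧
    ∃ ε > 0, ∀ k : ℝ, ω / Cs ≤ k → k < ω / Cs + ε → gt k < 0 := by
  intro gt
  have hCp : 0 < Cp := hCs.trans hCsCp
  set s := Real.sqrt (Cp ^ 2 - Cs ^ 2) with hs
  have hdiff : (0:ℝ) < Cp ^ 2 - Cs ^ 2 := by nlinarith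
  have hs2 : s ^ 2 = Cp ^ 2 - Cs ^ 2 := Real.sq_sqrt hdiff.le
  have hspos : 0 < s := Real.sqrt_pos.mpr hdiff
  -- first sqrt at cutoff is 0
  have h1 : Real.sqrt ((ω / Cs) ^ 2 - ω ^ 2 / Cs ^ 2) = 0 := by
    rw [div_pow, ← sub_div]
    simp
  -- second sqrt at cutoff
  have h2 : Real.sqrt ((ω / Cs) ^ 2 - ω ^ 2 / Cp ^ 2) = ω * s / (Cs * Cp) := by
    have hEq : (ω / Cs) ^ 2 - ω ^ 2 / Cp ^ 2 = (ω * s / (Cs * Cp)) ^ 2 := by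
      field_simp
      rw [hs2]
    rw [hEq, Real.sqrt_sq (by positivity)]
  have hval : gt (ω / Cs) = (2 * ω ^ 4 / (Cp * Cs ^ 2)) *
      (Cp * (Cp + Cs) - (Cp + 2 * Cs) * s) := by
    show (2 * ((Cs ^ 3 * ((ω/Cs) ^ 2 + Real.sqrt ((ω/Cs) ^ 2 - ω ^ 2 / Cs ^ 2) ^ 2) ^ 2
            + ω ^ 2 * Cp * (ω/Cs) ^ 2)
          + (4 * Cs ^ 3 * (ω/Cs) ^ 2 + Cp * ω ^ 2) * Real.sqrt ((ω/Cs) ^ 2 - ω ^ 2 / Cs ^ 2)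
              * Real.sqrt ((ω/Cs) ^ 2 - ω ^ 2 / Cp ^ 2))
        - 2 * (ω/Cs) * (Cp * ω ^ 2 + 2 * Cs ^ 3 * ((ω/Cs) ^ 2 + Real.sqrt ((ω/Cs) ^ 2 - ω ^ 2 / Cs ^ 2) ^ 2))
            * (Real.sqrt ((ω/Cs) ^ 2 - ω ^ 2 / Cs ^ 2) + Real.sqrt ((ω/Cs) ^ 2 - ω ^ 2 / Cp ^ 2))) = _
    rw [h1, h2]
    field_simp
    ring
  have hineq : Cp * (Cp + Cs) < (Cp + 2 * Cs) * s := by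
    have hsq : (Cp * (Cp + Cs)) ^ 2 < ((Cp + 2 * Cs) * s) ^ 2 := by
      have : ((Cp + 2 * Cs) * s) ^ 2 = (Cp + 2 * Cs) ^ 2 * (Cp ^ 2 - Cs ^ 2) := by
        rw [mul_pow, hs2]
      rw [this]; nlinarith [mul_pos hCs (sub_pos.mpr hCp2), mul_pos (mul_pos hCs (sub_pos.mpr hCp2)) (by linarith : (0:ℝ) < Cp + Cs)]
    exact lt_of_pow_lt_pow_left₀ 2 (by positivity) hsq
  have hneg : gt (ω / Cs) < 0 := by
    rw [hval]
    apply mul_neg_of_pos_of_neg (by positivity)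
    linarith
  refine ⟨hval, hineq, hneg, ?_⟩
  have hcont : Continuous gt := by
    apply Continuous.sub
    · apply Continuous.mul continuous_const
      apply Continuous.add
      · fun_prop
      · fun_prop
    · fun_prop
  have htend : Filter.Tendsto gt (nhds (ω / Cs)) (nhds (gt (ω / Cs))) :=
    hcont.continuousAt
  have hev : ∀ᶠ k in nhds (ω / Cs), gt k < 0 :=
    htend.eventually (eventually_lt_nhds hneg)
  rcases Metric.eventually_nhds_iff.mp hev with ⟨ε, hε, hball⟩
  refine ⟨ε, hε, fun k hk1 hk2 => ?_⟩
  apply hball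
  rw [Real.dist_eq, abs_lt]
  constructor <;> linarith
end

section
/- Small-overlap divergence of Taylor transmission conditions above the shear cutoff (Theorem 3.4, last case): let k > ω/Cs be a Fourier frequency (so λ₁ = √(k² − ω²/Cs²) > 0 and λ₂ = √(k² − ω²/Cp²) > 0 are real) such that 2(Z₁ + Z₂) − K(λ₁ + λ₂) < 0. Then there exists δ₀ > 0 such that for every overlap δ with 0 < δ < δ₀, the quadratic Q_δ(z) = z² − (X_δ² + 2Y_δ)z + Y_δ² has a root of modulus strictly greater than 1; hence the overlapping Schwarz method with zeroth-order Taylor transmission conditions diverges at such frequencies when the overlap is too small. -/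
noncomputable section

open Complex Filter Topology

/-- Schur–Cohn-type criterion: if `|X + conj X · Y| > 1 − |Y|²` then the monic quadratic
`t² − Xt − Y` has a root of modulus `> 1`. -/
lemma quad_root_big (X Y : ℂ)
    (h : 1 - (‖Y‖)^2 < ‖X + (starRingEnd ℂ) X * Y‖) :
    ∃ t : ℂ, t^2 - X*t - Y = 0 ∧ 1 < ‖t‖ := by
  obtain ⟨d, hd⟩ : ∃ d : ℂ, d^2 = X^2 + 4*Y :=
    ⟨(X^2+4*Y) ^ (((2:ℕ):ℂ))⁻¹, Complex.cpow_nat_inv_pow _ two_ne_zero⟩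
  set t₁ := (X + d)/2 with ht₁
  set t₂ := (X - d)/2 with ht₂
  have hsum : t₁ + t₂ = X := by rw [ht₁, ht₂]; ring
  have hY : Y = -(t₁ * t₂) := by rw [ht₁, ht₂]; linear_combination -hd/4
  have h₁ : t₁^2 - X*t₁ - Y = 0 := by rw [ht₁]; linear_combination hd/4
  have h₂ : t₂^2 - X*t₂ - Y = 0 := by rw [ht₂]; linear_combination hd/4
  by_contra hcon
  push_neg at hcon
  have ha : ‖t₁‖ ≤ 1 := hcon t₁ h₁
  have hb : ‖t₂‖ ≤ 1 := hcon t₂ h₂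
  have hc : (starRingEnd ℂ) X = (starRingEnd ℂ) t₁ + (starRingEnd ℂ) t₂ := by
    rw [← hsum, map_add]
  have key : X + (starRingEnd ℂ) X * Y
      = t₁*(1 - ((normSq t₂ : ℝ) : ℂ)) + t₂*(1 - ((normSq t₁ : ℝ) : ℂ)) := by
    rw [hc, hY, ← hsum, ← Complex.mul_conj, ← Complex.mul_conj]
    ring
  set a := ‖t₁‖
  set b := ‖t₂‖
  have ha0 : 0 ≤ a := norm_nonneg _
  have hb0 : 0 ≤ b := norm_nonneg _
  have hns1 : (normSq t₁ : ℝ) = a^2 := (Complex.sq_norm t₁).symm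
  have hns2 : (normSq t₂ : ℝ) = b^2 := (Complex.sq_norm t₂).symm
  have habsY : ‖Y‖ = a * b := by rw [hY, norm_neg, norm_mul]
  have hbound : ‖X + (starRingEnd ℂ) X * Y‖ ≤ a*(1-b^2) + b*(1-a^2) := by
    rw [key]
    refine le_trans (norm_add_le _ _) ?_
    rw [norm_mul, norm_mul]
    have e1 : ‖1 - ((normSq t₂ : ℝ) : ℂ)‖ = 1 - b^2 := by
      rw [show (1 : ℂ) - ((normSq t₂ : ℝ) : ℂ) = ((1 - normSq t₂ : ℝ) : ℂ) by push_cast; ring,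
        Complex.norm_real, Real.norm_eq_abs, hns2]
      exact abs_of_nonneg (by nlinarith)
    have e2 : ‖1 - ((normSq t₁ : ℝ) : ℂ)‖ = 1 - a^2 := by
      rw [show (1 : ℂ) - ((normSq t₁ : ℝ) : ℂ) = ((1 - normSq t₁ : ℝ) : ℂ) by push_cast; ring,
        Complex.norm_real, Real.norm_eq_abs, hns1]
      exact abs_of_nonneg (by nlinarith)
    rw [e1, e2]
  rw [habsY] at h
  nlinarith [mul_nonneg (mul_nonneg (sub_nonneg.2 ha) (sub_nonneg.2 hb))
    (sub_nonneg.2 (mul_le_one₀ ha hb0 hb))]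

/-- The ratio `(e^{−l₁δ} − e^{−l₂δ})/(1 − e^{−(l₁+l₂)δ})` tends to `(l₂−l₁)/(l₁+l₂)`
as `δ → 0⁺`. -/
lemma tendsto_ratio (l1 l2 : ℝ) (h1 : 0 < l1) (h2 : 0 < l2) :
    Tendsto (fun δ : ℝ => (Real.exp (-l1*δ) - Real.exp (-l2*δ)) / (1 - Real.exp (-(l1+l2)*δ)))
      (nhdsWithin 0 (Set.Ioi 0)) (nhds ((l2-l1)/(l1+l2))) := by
  have hg : HasDerivAt (fun δ:ℝ => Real.exp (-l1*δ) - Real.exp (-l2*δ)) (l2 - l1) 0 := by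
    have e1 : HasDerivAt (fun δ:ℝ => Real.exp (-l1*δ)) (-l1) 0 := by
      simpa using ((hasDerivAt_id (0:ℝ)).const_mul (-l1)).exp
    have e2 : HasDerivAt (fun δ:ℝ => Real.exp (-l2*δ)) (-l2) 0 := by
      simpa using ((hasDerivAt_id (0:ℝ)).const_mul (-l2)).exp
    rw [show l2 - l1 = -l1 - -l2 by ring]; exact e1.sub e2
  have hh : HasDerivAt (fun δ:ℝ => 1 - Real.exp (-(l1+l2)*δ)) (l1+l2) 0 := by
    have e3 : HasDerivAt (fun δ:ℝ => Real.exp (-(l1+l2)*δ)) (-(l1+l2)) 0 := by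
      simpa using ((hasDerivAt_id (0:ℝ)).const_mul (-(l1+l2))).exp
    simpa using e3.const_sub 1
  have tg := hasDerivAt_iff_tendsto_slope.mp hg
  have th := hasDerivAt_iff_tendsto_slope.mp hh
  have hsub : nhdsWithin (0:ℝ) (Set.Ioi 0) ≤ nhdsWithin 0 {(0:ℝ)}ᶜ :=
    nhdsWithin_mono _ (fun x hx => ne_of_gt hx)
  have tdiv := (tg.mono_left hsub).div (th.mono_left hsub) (by positivity)
  refine tdiv.congr' ?_
  filter_upwards [self_mem_nhdsWithin] with δ (hδ : 0 < δ)
  have hδ0 : δ ≠ 0 := ne_of_gt hδ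
  simp only [Pi.div_apply, slope_def_field]
  norm_num
  rw [div_div_div_cancel_right₀ hδ0]

/-- Complex numerator identity for the determinant of the iteration matrix. -/
lemma det_num_id (a bp d1 cp l1 l2 Kr : ℝ)
    (hN : a^2 + bp^2 - l1*l2*Kr^2 = d1^2 + cp^2) :
    ((-(a:ℂ) - (bp:ℂ)*Complex.I) * (-(a:ℂ) + (bp:ℂ)*Complex.I)
      - (Complex.I*(l2:ℂ)*(Kr:ℂ)) * (-Complex.I*(l1:ℂ)*(Kr:ℂ)))
      = ((d1:ℂ) - (cp:ℂ)*Complex.I) * ((d1:ℂ) + (cp:ℂ)*Complex.I) := by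
  have hNc : ((a:ℂ))^2 + ((bp:ℂ))^2 - (l1:ℂ)*(l2:ℂ)*((Kr:ℂ))^2 = ((d1:ℂ))^2 + ((cp:ℂ))^2 := by
    exact_mod_cast congrArg (fun x : ℝ => (x : ℂ)) hN
  linear_combination (-(Complex.I^2)) * hNc + ((a:ℂ)^2 - (d1:ℂ)^2) * Complex.I_sq

set_option maxHeartbeats 1000000 in
/-- **Theorem 3.4, last case**: let `k > ω/Cs` (so `λ₁, λ₂ > 0` are real) be such that
`2(Z₁ + Z₂) − K(λ₁ + λ₂) < 0` (real quantities). Then there is `δ₀ > 0` such that for every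
overlap `0 < δ < δ₀` the quadratic `Q_δ(z) = z² − (X_δ² + 2Y_δ)z + Y_δ²` has a root of
modulus strictly greater than `1`: the overlapping Schwarz method with zeroth-order Taylor
transmission conditions diverges at such frequencies when the overlap is too small. -/
theorem taylor_overlapping_divergence_above_shear
    (ω Cs Cp k : ℝ)
    (hω : 0 < ω) (hCs : 0 < Cs) (hCsCp : Cs < Cp) (hCp2 : 2 * Cs ^ 2 < Cp ^ 2)
    (hk : ω / Cs < k)
    (hD : Dq ω Cs Cp k ≠ 0)
    (hneg : 2 * ((Cs ^ 3 * (k ^ 2 + Real.sqrt (k ^ 2 - ω ^ 2 / Cs ^ 2) ^ 2) ^ 2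
          + ω ^ 2 * Cp * k ^ 2)
        + (4 * Cs ^ 3 * k ^ 2 + Cp * ω ^ 2) * Real.sqrt (k ^ 2 - ω ^ 2 / Cs ^ 2)
            * Real.sqrt (k ^ 2 - ω ^ 2 / Cp ^ 2))
      - 2 * k * (Cp * ω ^ 2 + 2 * Cs ^ 3 * (k ^ 2 + Real.sqrt (k ^ 2 - ω ^ 2 / Cs ^ 2) ^ 2))
          * (Real.sqrt (k ^ 2 - ω ^ 2 / Cs ^ 2) + Real.sqrt (k ^ 2 - ω ^ 2 / Cp ^ 2)) < 0) :
    ∃ δ₀ > 0, ∀ δ : ℝ, 0 < δ → δ < δ₀ →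
      ∃ z : ℂ, Qd ω Cs Cp k δ z = 0 ∧ 1 < ‖z‖ := by
  have hCp : 0 < Cp := hCs.trans hCsCp
  have hk0 : 0 < k := lt_trans (div_pos hω hCs) hk
  have hrad1 : 0 < k ^ 2 - ω ^ 2 / Cs ^ 2 := by
    have h0 : 0 < ω / Cs := div_pos hω hCs
    have e : (ω/Cs)^2 = ω^2/Cs^2 := div_pow ω Cs 2
    nlinarith [mul_pos (sub_pos.2 hk) (by positivity : (0:ℝ) < k + ω/Cs)]
  have hrad2 : 0 < k ^ 2 - ω ^ 2 / Cp ^ 2 := by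
    have : ω ^ 2 / Cp ^ 2 < ω ^ 2 / Cs ^ 2 :=
      div_lt_div_of_pos_left (by positivity) (by positivity) (by nlinarith)
    linarith
  set l1 := Real.sqrt (k ^ 2 - ω ^ 2 / Cs ^ 2) with hl1def
  set l2 := Real.sqrt (k ^ 2 - ω ^ 2 / Cp ^ 2) with hl2def
  have hl1 : 0 < l1 := Real.sqrt_pos.2 hrad1
  have hl2 : 0 < l2 := Real.sqrt_pos.2 hrad2
  have hl1sq : l1 ^ 2 = k ^ 2 - ω ^ 2 / Cs ^ 2 := Real.sq_sqrt hrad1.le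
  have hl2sq : l2 ^ 2 = k ^ 2 - ω ^ 2 / Cp ^ 2 := Real.sq_sqrt hrad2.le
  have hlam1 : lam1 ω Cs k = ((l1 : ℝ) : ℂ) := by
    rw [lam1, show ((1:ℂ)/2) = ((1/2 : ℝ) : ℂ) by norm_num,
      ← Complex.ofReal_cpow hrad1.le, ← Real.sqrt_eq_rpow, hl1def]
  have hlam2 : lam2 ω Cp k = ((l2 : ℝ) : ℂ) := by
    rw [lam2, show ((1:ℂ)/2) = ((1/2 : ℝ) : ℂ) by norm_num,
      ← Complex.ofReal_cpow hrad2.le, ← Real.sqrt_eq_rpow, hl2def]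
  set z1 := Cs ^ 3 * (k ^ 2 + l1 ^ 2) ^ 2 + ω ^ 2 * Cp * k ^ 2 with hz1
  set z2 := (4 * Cs ^ 3 * k ^ 2 + Cp * ω ^ 2) * l1 * l2 with hz2
  set Kr := 2 * k * (Cp * ω ^ 2 + 2 * Cs ^ 3 * (k ^ 2 + l1 ^ 2)) with hKr
  set a := z1 + z2 with ha
  set bp := ω ^ 3 * (l1 - l2 * Cp / Cs) with hbp
  set cp := ω ^ 3 * (l1 + l2 * Cp / Cs) with hcp
  set d1 := z2 - z1 with hd1
  -- hneg is now : 2 * a - Kr * (l1 + l2) < 0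
  have hz1pos : 0 < z1 := by rw [hz1]; positivity
  have hz2pos : 0 < z2 := by rw [hz2]; positivity
  have hapos : 0 < a := by rw [ha]; linarith
  have hKrpos : 0 < Kr := by rw [hKr]; positivity
  have hfac : 0 < Kr * (l1 + l2) - 2 * a := by linarith
  -- the fundamental real identity
  have hN : a^2 + bp^2 - l1*l2*Kr^2 = d1^2 + cp^2 := by
    rw [ha, hbp, hKr, hd1, hcp, hz1, hz2]
    have hc : Cs * Cs⁻¹ = 1 := mul_inv_cancel₀ hCs.ne'
    linear_combination (4*Cp*ω^2*Cs^3*l1*l2*(l1^2 - k^2 - ω^2/Cs^2)) * hl1sq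
      + (4*Cp*ω^6*l1*l2*Cs⁻¹*((Cs*Cs⁻¹)^2 + Cs*Cs⁻¹ + 1)) * hc
  have hE : a^2*(l1-l2)^2 + bp^2*(l1+l2)^2 - (d1^2+cp^2)*(l1+l2)^2
      = l1*l2*(Kr*(l1+l2)-2*a)*(Kr*(l1+l2)+2*a) := by
    linear_combination (l1+l2)^2 * hN
  have hEpos : 0 < l1*l2*(Kr*(l1+l2)-2*a)*(Kr*(l1+l2)+2*a) := by
    have : 0 < Kr*(l1+l2)+2*a := by nlinarith
    exact mul_pos (mul_pos (mul_pos hl1 hl2) hfac) this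
  -- complex building blocks
  have hZ1 : Z1 ω Cs Cp k = ((z1 : ℝ) : ℂ) := by
    rw [Z1, hlam1, hz1]; push_cast; ring
  have hZ2 : Z2 ω Cs Cp k = ((z2 : ℝ) : ℂ) := by
    rw [Z2, hlam1, hlam2, hz2]; push_cast; ring
  have hKq : Kq ω Cs Cp k = ((Kr : ℝ) : ℂ) := by
    rw [Kq, hlam1, hKr]; push_cast; ring
  have hDq : Dq ω Cs Cp k = ((d1 : ℝ) : ℂ) + ((cp : ℝ) : ℂ) * Complex.I := by
    rw [Dq, hZ1, hZ2, hlam1, hlam2, hd1, hcp]; push_cast; ring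
  have hb11 : b11 ω Cs Cp k = (-(a:ℂ) - (bp:ℂ)*Complex.I) / Dq ω Cs Cp k := by
    rw [b11, hZ1, hZ2, hlam1, hlam2]; rw [ha, hbp]; push_cast; ring
  have hb22 : b22 ω Cs Cp k = (-(a:ℂ) + (bp:ℂ)*Complex.I) / Dq ω Cs Cp k := by
    rw [b22, hZ1, hZ2, hlam1, hlam2]; rw [ha, hbp]; push_cast; ring
  have hb12 : b12 ω Cs Cp k = (Complex.I*(l2:ℂ)*(Kr:ℂ)) / Dq ω Cs Cp k := by
    rw [b12, hKq, hlam2]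
  have hb21 : b21 ω Cs Cp k = (-Complex.I*(l1:ℂ)*(Kr:ℂ)) / Dq ω Cs Cp k := by
    rw [b21, hKq, hlam1]
  have hconjD : (starRingEnd ℂ) (Dq ω Cs Cp k) = ((d1:ℂ) - (cp:ℂ)*Complex.I) := by
    rw [hDq]; simp [map_add, map_mul, Complex.conj_ofReal, Complex.conj_I]; ring
  have hDbar : ((d1:ℂ) - (cp:ℂ)*Complex.I) ≠ 0 := by
    rw [← hconjD]
    simpa using hD
  have habsDbar : ‖(d1:ℂ) - (cp:ℂ)*Complex.I‖ = ‖Dq ω Cs Cp k‖ := by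
    rw [← hconjD, Complex.norm_conj]
  have hdet : b11 ω Cs Cp k * b22 ω Cs Cp k - b12 ω Cs Cp k * b21 ω Cs Cp k
      = ((d1:ℂ) - (cp:ℂ)*Complex.I) / Dq ω Cs Cp k := by
    have hnum := det_num_id a bp d1 cp l1 l2 Kr hN
    calc b11 ω Cs Cp k * b22 ω Cs Cp k - b12 ω Cs Cp k * b21 ω Cs Cp k
        = ((-(a:ℂ) - (bp:ℂ)*Complex.I) * (-(a:ℂ) + (bp:ℂ)*Complex.I)
            - (Complex.I*(l2:ℂ)*(Kr:ℂ)) * (-Complex.I*(l1:ℂ)*(Kr:ℂ)))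
            / (Dq ω Cs Cp k * Dq ω Cs Cp k) := by
          rw [hb11, hb22, hb12, hb21]; ring
      _ = (((d1:ℂ) - (cp:ℂ)*Complex.I) * ((d1:ℂ) + (cp:ℂ)*Complex.I))
            / (Dq ω Cs Cp k * Dq ω Cs Cp k) := by rw [hnum]
      _ = ((d1:ℂ) - (cp:ℂ)*Complex.I) / Dq ω Cs Cp k := by
          rw [← hDq]
          rw [mul_comm (Dq ω Cs Cp k) (Dq ω Cs Cp k)]
          exact mul_div_mul_right _ _ hD
  have hMpos : 0 < d1^2 + cp^2 := by
    have h1 := norm_pos_iff.mpr hD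
    rw [hDq, Complex.norm_add_mul_I] at h1
    exact Real.sqrt_pos.mp h1
  have habsD : ‖Dq ω Cs Cp k‖ = Real.sqrt (d1^2 + cp^2) := by
    rw [hDq, Complex.norm_add_mul_I]
  -- limit argument
  have hll : 0 < l1 + l2 := by linarith
  have hL : d1^2 + cp^2 < a^2*((l2-l1)/(l1+l2))^2 + bp^2 := by
    have hLsq : (a^2*((l2-l1)/(l1+l2))^2 + bp^2) * (l1+l2)^2
        = a^2*(l1-l2)^2 + bp^2*(l1+l2)^2 := by
      field_simp
      ring
    have h2 : (0:ℝ) < (l1+l2)^2 := by positivity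
    have h1 : 0 < ((a^2*((l2-l1)/(l1+l2))^2 + bp^2) - (d1^2+cp^2)) * (l1+l2)^2 := by
      rw [sub_mul, hLsq, hE]; exact hEpos
    have h3 := div_pos h1 h2
    rw [mul_div_cancel_right₀ _ (ne_of_gt h2)] at h3
    exact sub_pos.mp h3
  have t1 := tendsto_ratio l1 l2 hl1 hl2
  have t2 : Tendsto (fun δ:ℝ => (Real.exp (-l1*δ) + Real.exp (-l2*δ))
      / (1 + Real.exp (-(l1+l2)*δ))) (nhdsWithin 0 (Set.Ioi 0)) (nhds 1) := by
    have hc : ContinuousAt (fun δ:ℝ => (Real.exp (-l1*δ) + Real.exp (-l2*δ))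
        / (1 + Real.exp (-(l1+l2)*δ))) 0 := by
      apply ContinuousAt.div
      · fun_prop
      · fun_prop
      · norm_num
    have h0 : (Real.exp (-l1*0) + Real.exp (-l2*0)) / (1 + Real.exp (-(l1+l2)*0)) = 1 := by
      norm_num
    have := hc.tendsto
    rw [h0] at this
    exact this.mono_left nhdsWithin_le_nhds
  have tF : Tendsto (fun δ:ℝ =>
      a^2*((Real.exp (-l1*δ) - Real.exp (-l2*δ))/(1 - Real.exp (-(l1+l2)*δ)))^2
      + bp^2*((Real.exp (-l1*δ) + Real.exp (-l2*δ))/(1 + Real.exp (-(l1+l2)*δ)))^2)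
      (nhdsWithin 0 (Set.Ioi 0)) (nhds (a^2*((l2-l1)/(l1+l2))^2 + bp^2)) := by
    have := ((t1.pow 2).const_mul (a^2)).add ((t2.pow 2).const_mul (bp^2))
    simpa using this
  have hev : ∀ᶠ δ in nhdsWithin (0:ℝ) (Set.Ioi 0), d1^2 + cp^2 <
      a^2*((Real.exp (-l1*δ) - Real.exp (-l2*δ))/(1 - Real.exp (-(l1+l2)*δ)))^2
      + bp^2*((Real.exp (-l1*δ) + Real.exp (-l2*δ))/(1 + Real.exp (-(l1+l2)*δ)))^2 :=
    tF.eventually (eventually_gt_nhds hL)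
  obtain ⟨δ₀, hδ₀mem, hsubset⟩ := mem_nhdsGT_iff_exists_Ioo_subset.mp hev
  refine ⟨δ₀, hδ₀mem, ?_⟩
  intro δ hδpos hδlt
  have hFδ : d1^2 + cp^2 <
      a^2*((Real.exp (-l1*δ) - Real.exp (-l2*δ))/(1 - Real.exp (-(l1+l2)*δ)))^2
      + bp^2*((Real.exp (-l1*δ) + Real.exp (-l2*δ))/(1 + Real.exp (-(l1+l2)*δ)))^2 :=
    hsubset ⟨hδpos, hδlt⟩
  set u := Real.exp (-l1*δ) with hu
  set v := Real.exp (-l2*δ) with hv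
  have hupos : 0 < u := Real.exp_pos _
  have hvpos : 0 < v := Real.exp_pos _
  have huv : u * v = Real.exp (-(l1+l2)*δ) := by
    rw [hu, hv, ← Real.exp_add]; ring_nf
  have huvlt : u * v < 1 := by
    rw [huv]
    exact Real.exp_lt_one_iff.mpr (mul_neg_of_neg_of_pos (neg_lt_zero.mpr hll) hδpos)
  have h1muv : 0 < 1 - u * v := sub_pos.mpr huvlt
  have h1puv : 0 < 1 + u * v := by positivity
  -- rewrite hFδ in terms of u, v
  rw [← huv] at hFδ
  -- complex exponentials are real
  have hexpu : Complex.exp (-(lam1 ω Cs k) * (δ : ℂ)) = ((u : ℝ) : ℂ) := by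
    rw [hlam1, hu, show -((l1:ℂ)) * (δ:ℂ) = ((-l1*δ : ℝ) : ℂ) by push_cast; ring]
    exact (Complex.ofReal_exp _).symm
  have hexpv : Complex.exp (-(lam2 ω Cp k) * (δ : ℂ)) = ((v : ℝ) : ℂ) := by
    rw [hlam2, hv, show -((l2:ℂ)) * (δ:ℂ) = ((-l2*δ : ℝ) : ℂ) by push_cast; ring]
    exact (Complex.ofReal_exp _).symm
  have hexpuv : Complex.exp (-(lam1 ω Cs k + lam2 ω Cp k) * (δ : ℂ)) = ((u * v : ℝ) : ℂ) := by
    rw [hlam1, hlam2, huv,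
      show -((l1:ℂ) + (l2:ℂ)) * (δ:ℂ) = ((-(l1+l2)*δ : ℝ) : ℂ) by push_cast; ring]
    exact (Complex.ofReal_exp _).symm
  -- the X and Y quantities
  have hXd : Xd ω Cs Cp k δ
      = (((-a*(u-v) : ℝ) : ℂ) + ((-bp*(u+v) : ℝ) : ℂ) * Complex.I) / Dq ω Cs Cp k := by
    rw [Xd, hexpu, hexpv, hb11, hb22]; push_cast; ring
  have hYd : Yd ω Cs Cp k δ
      = ((u*v : ℝ) : ℂ) * ((d1:ℂ) - (cp:ℂ)*Complex.I) / Dq ω Cs Cp k := by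
    rw [Yd, hexpuv, hdet]; ring
  have hconjX : (starRingEnd ℂ) (Xd ω Cs Cp k δ)
      = (((-a*(u-v) : ℝ) : ℂ) - ((-bp*(u+v) : ℝ) : ℂ) * Complex.I)
        / (((d1:ℂ) - (cp:ℂ)*Complex.I)) := by
    rw [hXd, map_div₀, hconjD]
    congr 1
    simp [map_add, map_mul, Complex.conj_ofReal, Complex.conj_I]
  have hW : Xd ω Cs Cp k δ + (starRingEnd ℂ) (Xd ω Cs Cp k δ) * Yd ω Cs Cp k δ
      = (((-a*(u-v)*(1+u*v) : ℝ) : ℂ) + ((-bp*(u+v)*(1-u*v) : ℝ) : ℂ) * Complex.I)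
        / Dq ω Cs Cp k := by
    rw [hconjX, hXd, hYd]
    rw [mul_comm (((u*v : ℝ) : ℂ)) _, mul_div_assoc, ← mul_assoc, div_mul_cancel₀ _ hDbar]
    field_simp
    push_cast
    ring
  -- modulus computations
  have habsY : ‖Yd ω Cs Cp k δ‖ = u * v := by
    rw [hYd, norm_div, norm_mul, Complex.norm_real, Real.norm_eq_abs, habsDbar, habsD,
      mul_div_assoc, div_self (by positivity : Real.sqrt (d1^2+cp^2) ≠ 0), mul_one]
    exact abs_of_nonneg (by positivity)
  have habsW : ‖Xd ω Cs Cp k δ + (starRingEnd ℂ) (Xd ω Cs Cp k δ) * Yd ω Cs Cp k δ‖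
      = Real.sqrt ((-a*(u-v)*(1+u*v))^2 + (-bp*(u+v)*(1-u*v))^2) / Real.sqrt (d1^2+cp^2) := by
    rw [hW, norm_div, habsD, Complex.norm_add_mul_I]
  -- the key inequality
  have hNM : (1 - (u*v)^2)^2 * (d1^2+cp^2)
      < (-a*(u-v)*(1+u*v))^2 + (-bp*(u+v)*(1-u*v))^2 := by
    have hNid : (-a*(u-v)*(1+u*v))^2 + (-bp*(u+v)*(1-u*v))^2
        = (a^2*((u-v)/(1-u*v))^2 + bp^2*((u+v)/(1+u*v))^2) * ((1-u*v)^2*(1+u*v)^2) := by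
      field_simp
    have hid2 : (1 - (u*v)^2)^2 = (1-u*v)^2*(1+u*v)^2 := by ring
    rw [hNid, hid2]
    have hpos : 0 < (1-u*v)^2*(1+u*v)^2 := by positivity
    rw [mul_comm ((1-u*v)^2*(1+u*v)^2) (d1^2+cp^2)]
    exact mul_lt_mul_of_pos_right hFδ hpos
  have hlt : 1 - (‖Yd ω Cs Cp k δ‖)^2
      < ‖Xd ω Cs Cp k δ + (starRingEnd ℂ) (Xd ω Cs Cp k δ) * Yd ω Cs Cp k δ‖ := by
    rw [habsY, habsW]
    have h2 : (1 - (u*v)^2)^2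
        < (Real.sqrt ((-a*(u-v)*(1+u*v))^2 + (-bp*(u+v)*(1-u*v))^2) / Real.sqrt (d1^2+cp^2))^2 := by
      rw [div_pow, Real.sq_sqrt (by positivity), Real.sq_sqrt hMpos.le]
      rw [lt_div_iff₀ hMpos]
      exact hNM
    refine lt_of_pow_lt_pow_left₀ 2 (by positivity) h2
  obtain ⟨t, ht, htabs⟩ := quad_root_big (Xd ω Cs Cp k δ) (Yd ω Cs Cp k δ) hlt
  refine ⟨t^2, ?_, ?_⟩
  · rw [Qd]
    linear_combination (t^2 + Xd ω Cs Cp k δ * t - Yd ω Cs Cp k δ) * ht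
  · rw [norm_pow]
    exact one_lt_pow₀ htabs two_ne_zero

end
end
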